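/- arXiv:1306.4041 — 3 statements merged into one kernel-verified Lean document; each statement's English description precedes it below -/
import Mathlib

section
/- Let w1 and w2 be continuous real-valued functions on [0,1]. Then sup_{x ∈ [0,1]} |P_{w1}(x) − P_{w2}(x)| ≤ sup_{x ∈ [0,1]} |w1(x) − w2(x)|, i.e., the isotonic projection operator is a contraction with respect to the supremum norm. -/
open MeasureTheory Set

/-- The isotonic projection of a function `w : [0,1] → ℝ`:
`P_w(x) = inf_{v : x ≤ v ≤ 1} sup_{u : 0 ≤ u ≤ x, u < v} (1/(v−u)) ∫_u^v w(t) dt`. -/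
noncomputable def isoProj (w : ℝ → ℝ) (x : ℝ) : ℝ :=
  sInf {y : ℝ | ∃ v : ℝ, x ≤ v ∧ v ≤ 1 ∧
    y = sSup {z : ℝ | ∃ u : ℝ, 0 ≤ u ∧ u ≤ x ∧ u < v ∧
      z = (v - u)⁻¹ * ∫ t in u..v, w t}}

lemma isoProj_avg_abs_le (w : ℝ → ℝ) {M : ℝ}
    (hM : ∀ t ∈ Icc (0:ℝ) 1, |w t| ≤ M) {u v : ℝ} (hu : 0 ≤ u) (huv : u < v) (hv : v ≤ 1) :
    |(v - u)⁻¹ * ∫ t in u..v, w t| ≤ M := by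
  have hvu : (0:ℝ) < v - u := by linarith
  have hint : |∫ t in u..v, w t| ≤ M * |v - u| := by
    rw [← Real.norm_eq_abs]
    apply intervalIntegral.norm_integral_le_of_norm_le_const
    intro t ht
    rw [uIoc_of_le huv.le] at ht
    rw [Real.norm_eq_abs]; exact hM t ⟨by linarith [ht.1], by linarith [ht.2]⟩
  rw [abs_of_pos hvu] at hint
  rw [abs_mul, abs_inv, abs_of_pos hvu]
  rw [inv_mul_le_iff₀ hvu]
  linarith [mul_comm M (v - u)]

lemma isoProj_avg_le (w₁ w₂ : ℝ → ℝ)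
    (hw₁ : ContinuousOn w₁ (Icc 0 1)) (hw₂ : ContinuousOn w₂ (Icc 0 1)) {C : ℝ}
    (hC : ∀ t ∈ Icc (0:ℝ) 1, |w₁ t - w₂ t| ≤ C) {u v : ℝ}
    (hu : 0 ≤ u) (huv : u < v) (hv : v ≤ 1) :
    (v - u)⁻¹ * ∫ t in u..v, w₁ t ≤ (v - u)⁻¹ * (∫ t in u..v, w₂ t) + C := by
  have hvu : (0:ℝ) < v - u := by linarith
  have hsub : uIcc u v ⊆ Icc (0:ℝ) 1 := by
    rw [uIcc_of_le huv.le]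
    exact Icc_subset_Icc hu hv
  have h₁ : IntervalIntegrable w₁ volume u v := (hw₁.mono hsub).intervalIntegrable
  have h₂ : IntervalIntegrable w₂ volume u v := (hw₂.mono hsub).intervalIntegrable
  have key : |(v - u)⁻¹ * ∫ t in u..v, (w₁ t - w₂ t)| ≤ C :=
    isoProj_avg_abs_le (fun t => w₁ t - w₂ t) hC hu huv hv
  rw [intervalIntegral.integral_sub h₁ h₂, mul_sub] at key
  have := (abs_le.1 key).2
  linarith

/-- One-sided comparison of the inner suprema. -/
lemma isoProj_sSup_le (w₁ w₂ : ℝ → ℝ)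
    (hw₁ : ContinuousOn w₁ (Icc 0 1)) (hw₂ : ContinuousOn w₂ (Icc 0 1)) {C : ℝ}
    (hC0 : 0 ≤ C) (hC : ∀ t ∈ Icc (0:ℝ) 1, |w₁ t - w₂ t| ≤ C) {x v : ℝ}
    (hx0 : 0 ≤ x) (hv : v ≤ 1) :
    sSup {z : ℝ | ∃ u : ℝ, 0 ≤ u ∧ u ≤ x ∧ u < v ∧
        z = (v - u)⁻¹ * ∫ t in u..v, w₁ t} ≤
      sSup {z : ℝ | ∃ u : ℝ, 0 ≤ u ∧ u ≤ x ∧ u < v ∧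
        z = (v - u)⁻¹ * ∫ t in u..v, w₂ t} + C := by
  obtain ⟨M₂, hM₂⟩ := isCompact_Icc.exists_bound_of_continuousOn hw₂
  simp only [Real.norm_eq_abs] at hM₂
  have hT₂bdd : BddAbove {z : ℝ | ∃ u : ℝ, 0 ≤ u ∧ u ≤ x ∧ u < v ∧
      z = (v - u)⁻¹ * ∫ t in u..v, w₂ t} := by
    refine ⟨M₂, ?_⟩
    rintro z ⟨u, hu0, hux, huv, rfl⟩
    exact (abs_le.1 (isoProj_avg_abs_le w₂ hM₂ hu0 huv hv)).2
  by_cases hne : ∃ u : ℝ, 0 ≤ u ∧ u ≤ x ∧ u < v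
  · obtain ⟨u₀, hu₀⟩ := hne
    refine csSup_le ?_ ?_
    · exact ⟨(v - u₀)⁻¹ * ∫ t in u₀..v, w₁ t, u₀, hu₀.1, hu₀.2.1, hu₀.2.2, rfl⟩
    rintro z ⟨u, hu0, hux, huv, rfl⟩
    calc (v - u)⁻¹ * ∫ t in u..v, w₁ t
        ≤ (v - u)⁻¹ * (∫ t in u..v, w₂ t) + C :=
          isoProj_avg_le w₁ w₂ hw₁ hw₂ hC hu0 huv hv
      _ ≤ _ + C := by
          gcongr
          exact le_csSup hT₂bdd ⟨u, hu0, hux, huv, rfl⟩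
  · have h₁ : {z : ℝ | ∃ u : ℝ, 0 ≤ u ∧ u ≤ x ∧ u < v ∧
        z = (v - u)⁻¹ * ∫ t in u..v, w₁ t} = ∅ := by
      ext z; simp only [mem_setOf_eq, mem_empty_iff_false, iff_false]
      rintro ⟨u, h1, h2, h3, _⟩; exact hne ⟨u, h1, h2, h3⟩
    have h₂ : {z : ℝ | ∃ u : ℝ, 0 ≤ u ∧ u ≤ x ∧ u < v ∧
        z = (v - u)⁻¹ * ∫ t in u..v, w₂ t} = ∅ := by
      ext z; simp only [mem_setOf_eq, mem_empty_iff_false, iff_false]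
      rintro ⟨u, h1, h2, h3, _⟩; exact hne ⟨u, h1, h2, h3⟩
    rw [h₁, h₂, Real.sSup_empty]
    linarith

lemma isoProj_le (w₁ w₂ : ℝ → ℝ)
    (hw₁ : ContinuousOn w₁ (Icc 0 1)) (hw₂ : ContinuousOn w₂ (Icc 0 1)) {C : ℝ}
    (hC0 : 0 ≤ C) (hC : ∀ t ∈ Icc (0:ℝ) 1, |w₁ t - w₂ t| ≤ C) {x : ℝ}
    (hx : x ∈ Icc (0:ℝ) 1) :
    isoProj w₁ x ≤ isoProj w₂ x + C := by
  obtain ⟨M₁, hM₁⟩ := isCompact_Icc.exists_bound_of_continuousOn hw₁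
  simp only [Real.norm_eq_abs] at hM₁
  have hM₁0 : 0 ≤ M₁ := le_trans (abs_nonneg _) (hM₁ 0 ⟨le_refl 0, by norm_num⟩)
  -- bddBelow of the outer set for w₁
  have hS₁bdd : BddBelow {y : ℝ | ∃ v : ℝ, x ≤ v ∧ v ≤ 1 ∧
      y = sSup {z : ℝ | ∃ u : ℝ, 0 ≤ u ∧ u ≤ x ∧ u < v ∧
        z = (v - u)⁻¹ * ∫ t in u..v, w₁ t}} := by
    refine ⟨-M₁, ?_⟩
    rintro y ⟨v, hxv, hv1, rfl⟩
    by_cases hne : ∃ u : ℝ, 0 ≤ u ∧ u ≤ x ∧ u < v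
    · obtain ⟨u₀, hu₀0, hu₀x, hu₀v⟩ := hne
      have hbddT : BddAbove {z : ℝ | ∃ u : ℝ, 0 ≤ u ∧ u ≤ x ∧ u < v ∧
          z = (v - u)⁻¹ * ∫ t in u..v, w₁ t} := by
        refine ⟨M₁, ?_⟩
        rintro z ⟨u, hu0, hux, huv, rfl⟩
        exact (abs_le.1 (isoProj_avg_abs_le w₁ hM₁ hu0 huv hv1)).2
      have hmem := le_csSup hbddT ⟨u₀, hu₀0, hu₀x, hu₀v, rfl⟩
      have hlow : -M₁ ≤ (v - u₀)⁻¹ * ∫ t in u₀..v, w₁ t :=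
        (abs_le.1 (isoProj_avg_abs_le w₁ hM₁ hu₀0 hu₀v hv1)).1
      linarith
    · have hempty : {z : ℝ | ∃ u : ℝ, 0 ≤ u ∧ u ≤ x ∧ u < v ∧
          z = (v - u)⁻¹ * ∫ t in u..v, w₁ t} = ∅ := by
        ext z; simp only [mem_setOf_eq, mem_empty_iff_false, iff_false]
        rintro ⟨u, h1, h2, h3, _⟩; exact hne ⟨u, h1, h2, h3⟩
      rw [hempty, Real.sSup_empty]; linarith
  have hS₂ne : {y : ℝ | ∃ v : ℝ, x ≤ v ∧ v ≤ 1 ∧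
      y = sSup {z : ℝ | ∃ u : ℝ, 0 ≤ u ∧ u ≤ x ∧ u < v ∧
        z = (v - u)⁻¹ * ∫ t in u..v, w₂ t}}.Nonempty :=
    ⟨_, 1, hx.2, le_refl 1, rfl⟩
  unfold isoProj
  rw [← sub_le_iff_le_add]
  apply le_csInf hS₂ne
  rintro y ⟨v, hxv, hv1, rfl⟩
  rw [sub_le_iff_le_add]
  calc sInf _ ≤ sSup {z : ℝ | ∃ u : ℝ, 0 ≤ u ∧ u ≤ x ∧ u < v ∧
        z = (v - u)⁻¹ * ∫ t in u..v, w₁ t} :=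
      csInf_le hS₁bdd ⟨v, hxv, hv1, rfl⟩
    _ ≤ _ := isoProj_sSup_le w₁ w₂ hw₁ hw₂ hC0 hC hx.1 hv1

/-- The isotonic projection is a contraction for the supremum norm on `[0,1]`. -/
theorem isoProj_sup_contraction (w₁ w₂ : ℝ → ℝ)
    (hw₁ : ContinuousOn w₁ (Icc 0 1)) (hw₂ : ContinuousOn w₂ (Icc 0 1)) :
    ⨆ x : Icc (0:ℝ) 1, |isoProj w₁ x - isoProj w₂ x| ≤
      ⨆ x : Icc (0:ℝ) 1, |w₁ x - w₂ x| := by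
  haveI : Nonempty (Icc (0:ℝ) 1) := ⟨⟨0, le_refl 0, by norm_num⟩⟩
  have himg : BddAbove ((fun t => |w₁ t - w₂ t|) '' Icc 0 1) :=
    (isCompact_Icc.image_of_continuousOn ((hw₁.sub hw₂).abs)).bddAbove
  have hbdd : BddAbove (range (fun x : Icc (0:ℝ) 1 => |w₁ x - w₂ x|)) := by
    apply himg.mono
    rintro _ ⟨⟨t, ht⟩, rfl⟩
    exact ⟨t, ht, rfl⟩
  set C := ⨆ x : Icc (0:ℝ) 1, |w₁ x - w₂ x| with hCdef
  have hC : ∀ t ∈ Icc (0:ℝ) 1, |w₁ t - w₂ t| ≤ C := fun t ht =>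
    le_ciSup hbdd (⟨t, ht⟩ : Icc (0:ℝ) 1)
  have hC0 : 0 ≤ C :=
    le_trans (abs_nonneg _) (hC 0 ⟨le_refl 0, by norm_num⟩)
  apply ciSup_le
  rintro ⟨x, hx⟩
  rw [abs_sub_le_iff]
  constructor
  · have := isoProj_le w₁ w₂ hw₁ hw₂ hC0 hC hx; linarith
  · have := isoProj_le w₂ w₁ hw₂ hw₁ hC0
      (fun t ht => by rw [abs_sub_comm]; exact hC t ht) hx
    linarith
end

section
/- Let w : [0,1] → ℝ be continuous. Then the isotonic projection P_w minimizes the L² distance to w over the set of continuous nondecreasing functions: for every F ∈ M[0,1], ∫_0^1 (w(t) − P_w(t))² dt ≤ ∫_0^1 (w(t) − F(t))² dt. -/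
open MeasureTheory Set
open scoped ENNReal

namespace IsoAux

noncomputable def IW (f : ℝ → ℝ) (x : ℝ) : ℝ := ∫ t in (0:ℝ)..x, f t

noncomputable def phi (f : ℝ → ℝ) (a x : ℝ) : ℝ := IW f x - a * x

def ZS (f : ℝ → ℝ) (x a : ℝ) : Set ℝ :=
  {s | s ∈ Icc 0 x ∧ ∀ r ∈ Icc 0 x, phi f a s ≤ phi f a r}

noncomputable def TX (f : ℝ → ℝ) (x a : ℝ) : ℝ := sSup (ZS f x a)

noncomputable def mm (f : ℝ → ℝ) (x a : ℝ) : ℝ := phi f a (TX f x a)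

variable {f : ℝ → ℝ} {M : ℝ}

lemma IW_sub (hf : Continuous f) (u v : ℝ) : IW f v - IW f u = ∫ t in u..v, f t := by
  rw [IW, IW, intervalIntegral.integral_interval_sub_left (hf.intervalIntegrable _ _)
    (hf.intervalIntegrable _ _)]

lemma IW_sub_le (hf : Continuous f) (hM : ∀ t, |f t| ≤ M) {u v : ℝ} (huv : u ≤ v) :
    IW f v - IW f u ≤ M * (v - u) := by
  rw [IW_sub hf]
  calc ∫ t in u..v, f t ≤ ∫ t in u..v, M := by
        apply intervalIntegral.integral_mono_on huv (hf.intervalIntegrable _ _)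
          (intervalIntegrable_const) (fun x _ => (abs_le.1 (hM x)).2)
    _ = M * (v - u) := by simp [mul_comm]

lemma le_IW_sub (hf : Continuous f) (hM : ∀ t, |f t| ≤ M) {u v : ℝ} (huv : u ≤ v) :
    -M * (v - u) ≤ IW f v - IW f u := by
  rw [IW_sub hf]
  calc (-M) * (v - u) = ∫ t in u..v, (-M : ℝ) := by simp [mul_comm]
    _ ≤ ∫ t in u..v, f t := by
        apply intervalIntegral.integral_mono_on huv intervalIntegrable_const
          (hf.intervalIntegrable _ _) (fun x _ => neg_le.2 ((neg_le.1 ((abs_le.1 (hM x)).1))))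

lemma IW_cont (hf : Continuous f) : Continuous (IW f) :=
  intervalIntegral.continuous_primitive (fun _ _ => hf.intervalIntegrable _ _) 0

lemma phi_cont (hf : Continuous f) (a : ℝ) : Continuous (phi f a) :=
  (IW_cont hf).sub (continuous_const.mul continuous_id)

lemma ZS_compact (hf : Continuous f) (x a : ℝ) : IsCompact (ZS f x a) := by
  have hcl : IsClosed (ZS f x a) := by
    have : ZS f x a = Icc 0 x ∩ ⋂ r ∈ Icc 0 x, {s | phi f a s ≤ phi f a r} := by
      ext s; simp [ZS, Set.mem_iInter]
    rw [this]
    exact isClosed_Icc.inter (isClosed_biInter fun r _ =>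
      isClosed_le (phi_cont hf a) continuous_const)
  exact isCompact_Icc.of_isClosed_subset hcl (fun s hs => hs.1)

lemma ZS_nonempty (hf : Continuous f) {x : ℝ} (hx : 0 ≤ x) (a : ℝ) :
    (ZS f x a).Nonempty := by
  obtain ⟨s, hs, hmin⟩ := isCompact_Icc.exists_isMinOn (nonempty_Icc.2 hx)
    ((phi_cont hf a).continuousOn)
  exact ⟨s, hs, fun r hr => hmin hr⟩

lemma TX_mem (hf : Continuous f) {x : ℝ} (hx : 0 ≤ x) (a : ℝ) : TX f x a ∈ ZS f x a :=
  (ZS_compact hf x a).sSup_mem (ZS_nonempty hf hx a)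

lemma TX_mem_Icc (hf : Continuous f) {x : ℝ} (hx : 0 ≤ x) (a : ℝ) : TX f x a ∈ Icc 0 x :=
  (TX_mem hf hx a).1

lemma TX_isMin (hf : Continuous f) {x : ℝ} (hx : 0 ≤ x) (a : ℝ) :
    ∀ r ∈ Icc 0 x, phi f a (TX f x a) ≤ phi f a r :=
  (TX_mem hf hx a).2

lemma le_TX (hf : Continuous f) (x a : ℝ) {s : ℝ} (hs : s ∈ ZS f x a) : s ≤ TX f x a :=
  le_csSup (ZS_compact hf x a).bddAbove hs

/-- Minimizers move right as `a` increases. -/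
lemma TX_mono (hf : Continuous f) {x : ℝ} (hx : 0 ≤ x) : Monotone (TX f x) := by
  intro a b hab
  rcases eq_or_lt_of_le hab with rfl | hab
  · exact le_rfl
  · set s₀ := TX f x a with hs₀
    have hs₀m := TX_mem hf hx a
    have key : ∀ s ∈ ZS f x b, s₀ ≤ s := by
      intro s hs
      by_contra hlt
      push_neg at hlt
      have h1 : phi f a s₀ ≤ phi f a s := hs₀m.2 s hs.1
      have h2 : phi f b s ≤ phi f b s₀ := hs.2 s₀ hs₀m.1
      have : phi f b s₀ = phi f a s₀ - (b - a) * s₀ := by simp [phi]; ring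
      have h3 : phi f b s = phi f a s - (b - a) * s := by simp [phi]; ring
      nlinarith
    calc s₀ ≤ TX f x b := key _ (TX_mem hf hx b)


lemma TX_one_le (hf : Continuous f) {x a : ℝ} (hx0 : 0 ≤ x) (hx1 : x ≤ 1)
    (hT : TX f 1 a ≤ x) : TX f x a = TX f 1 a := by
  set T := TX f 1 a with hT1
  have hTm := TX_mem hf zero_le_one a
  have hTZ : T ∈ ZS f x a := by
    refine ⟨⟨hTm.1.1, hT⟩, fun r hr => hTm.2 r ⟨hr.1, hr.2.trans hx1⟩⟩
  have hub : ∀ s ∈ ZS f x a, s ≤ T := by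
    intro s hs
    have h1 : phi f a s ≤ phi f a T := hs.2 T hTZ.1
    have h2 : phi f a T ≤ phi f a s := hTm.2 s ⟨hs.1.1, hs.1.2.trans hx1⟩
    have heq : phi f a s = phi f a T := le_antisymm h1 h2
    exact le_TX hf 1 a ⟨⟨hs.1.1, hs.1.2.trans hx1⟩, fun r hr => heq ▸ hTm.2 r hr⟩
  exact le_antisymm (csSup_le (ZS_nonempty hf hx0 a) hub) (le_TX hf x a hTZ)

lemma TX_le_min (hf : Continuous f) {x a : ℝ} (hx0 : 0 ≤ x) (hx1 : x ≤ 1) :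
    TX f x a ≤ min (TX f 1 a) x := by
  rcases le_or_gt (TX f 1 a) x with h | h
  · rw [TX_one_le hf hx0 hx1 h]; exact le_min le_rfl h
  · exact le_min ((TX_mem_Icc hf hx0 a).2.trans h.le) (TX_mem_Icc hf hx0 a).2

lemma TX_of_ge (hf : Continuous f) (hM : ∀ t, |f t| ≤ M) {x a : ℝ} (hx : 0 ≤ x)
    (ha : M ≤ a) : TX f x a = x := by
  have hxZ : x ∈ ZS f x a := by
    refine ⟨⟨hx, le_rfl⟩, fun r hr => ?_⟩
    have h1 : IW f x - IW f r ≤ M * (x - r) := IW_sub_le hf hM hr.2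
    simp only [phi]; nlinarith [hr.2]
  exact le_antisymm (TX_mem_Icc hf hx a).2 (le_TX hf x a hxZ)

lemma TX_of_lt (hf : Continuous f) (hM : ∀ t, |f t| ≤ M) {x a : ℝ} (hx : 0 ≤ x)
    (ha : a < -M) : TX f x a = 0 := by
  have hstrict : ∀ s r, 0 ≤ s → s < r → r ≤ x → phi f a s < phi f a r := by
    intro s r hs hsr hrx
    have h1 : -M * (r - s) ≤ IW f r - IW f s := le_IW_sub hf hM hsr.le
    simp only [phi]; nlinarith
  have h0Z : (0:ℝ) ∈ ZS f x a := by
    refine ⟨⟨le_rfl, hx⟩, fun r hr => ?_⟩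
    rcases eq_or_lt_of_le hr.1 with h0 | h0
    · rw [← h0]
    · exact (hstrict 0 r le_rfl h0 hr.2).le
  refine le_antisymm (csSup_le (ZS_nonempty hf hx a) (fun s hs => ?_)) (le_TX hf x a h0Z)
  by_contra hpos
  push_neg at hpos
  exact absurd (hs.2 0 ⟨le_rfl, hx⟩) (not_le.2 (hstrict 0 s le_rfl hpos hs.1.2))

lemma mm_at_negM (hf : Continuous f) (hM : ∀ t, |f t| ≤ M) {x : ℝ} (hx : 0 ≤ x) :
    mm f x (-M) = 0 := by
  have hT := TX_mem hf hx (-M)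
  have h1 : phi f (-M) (TX f x (-M)) ≤ phi f (-M) 0 := hT.2 0 ⟨le_rfl, hx⟩
  have h2 : (0:ℝ) ≤ phi f (-M) (TX f x (-M)) := by
    have := le_IW_sub hf hM (hT.1.1 : (0:ℝ) ≤ TX f x (-M))
    simp only [phi, IW, intervalIntegral.integral_same] at *
    nlinarith
  have h3 : phi f (-M) 0 = 0 := by simp [phi, IW]
  exact le_antisymm (h3 ▸ h1) h2

lemma mm_at_M (hf : Continuous f) (hM : ∀ t, |f t| ≤ M) {x : ℝ} (hx : 0 ≤ x) :
    mm f x M = IW f x - M * x := by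
  have hT := TX_mem hf hx M
  have h1 : phi f M (TX f x M) ≤ phi f M x := hT.2 x ⟨hx, le_rfl⟩
  have h2 : phi f M x ≤ phi f M (TX f x M) := by
    have := IW_sub_le hf hM (hT.1.2 : TX f x M ≤ x)
    simp only [phi]; nlinarith
  have : phi f M x = IW f x - M * x := rfl
  rw [mm, le_antisymm h1 h2, this]

lemma envelope_low (hf : Continuous f) {x a b : ℝ} (hx : 0 ≤ x) (hab : a ≤ b) :
    TX f x a * (b - a) ≤ mm f x a - mm f x b := by
  have hTa := TX_mem hf hx a
  have h1 : mm f x b ≤ phi f b (TX f x a) := (TX_mem hf hx b).2 _ hTa.1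
  have h2 : phi f b (TX f x a) = mm f x a - (b - a) * TX f x a := by
    simp only [mm, phi]; ring
  nlinarith [h1, h2]

lemma envelope_high (hf : Continuous f) {x a b : ℝ} (hx : 0 ≤ x) (hab : a ≤ b) :
    mm f x a - mm f x b ≤ TX f x b * (b - a) := by
  have hTb := TX_mem hf hx b
  have h1 : mm f x a ≤ phi f a (TX f x b) := (TX_mem hf hx a).2 _ hTb.1
  have h2 : phi f a (TX f x b) = mm f x b + (b - a) * TX f x b := by
    simp only [mm, phi]; ring
  nlinarith [h1, h2]


/-- A monotone "sandwich derivative" integrates the decrement exactly. -/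
lemma sandwich_integral {g h : ℝ → ℝ} (hg : Monotone g) {a b : ℝ} (hab : a ≤ b)
    (hlow : ∀ u v, a ≤ u → u ≤ v → v ≤ b → g u * (v - u) ≤ h u - h v)
    (hhigh : ∀ u v, a ≤ u → u ≤ v → v ≤ b → h u - h v ≤ g v * (v - u)) :
    h a - h b = ∫ t in a..b, g t := by
  have hgint : ∀ u v : ℝ, IntervalIntegrable g volume u v := fun u v =>
    (hg.monotoneOn _).intervalIntegrable
  set I := ∫ t in a..b, g t with hI
  have key : ∀ n : ℕ, 0 < n → |h a - h b - I| ≤ (g b - g a) * (b - a) / n := by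
    intro n hn
    set δ := (b - a) / n with hδ
    have hδ0 : 0 ≤ δ := div_nonneg (by linarith) (Nat.cast_nonneg n)
    set p : ℕ → ℝ := fun i => a + i * δ with hp
    have hpmono : ∀ i : ℕ, p i ≤ p (i + 1) := by
      intro i
      simp only [hp]
      push_cast
      nlinarith [hδ0]
    have hpa : ∀ i : ℕ, a ≤ p i := by
      intro i
      simp only [hp]
      have : 0 ≤ (i:ℝ) * δ := mul_nonneg (Nat.cast_nonneg i) hδ0
      linarith
    have hpn : p n = b := by
      simp only [hp, hδ]
      field_simp
      ring
    have hpb : ∀ i : ℕ, i ≤ n → p i ≤ b := by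
      intro i hi
      rw [← hpn]
      simp only [hp]
      have : (i:ℝ) ≤ (n:ℝ) := Nat.cast_le.2 hi
      nlinarith
    have hsum1 : h a - h b = ∑ i ∈ Finset.range n, (h (p i) - h (p (i + 1))) := by
      rw [Finset.sum_range_sub' (fun i => h (p i)), show p 0 = a by simp [hp], hpn]
    have hsum2 : I = ∑ i ∈ Finset.range n, ∫ t in (p i)..(p (i+1)), g t := by
      rw [intervalIntegral.sum_integral_adjacent_intervals (fun k _ => hgint _ _),
        show p 0 = a by simp [hp], hpn]
    have hterm : ∀ i ∈ Finset.range n,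
        |(h (p i) - h (p (i+1))) - ∫ t in (p i)..(p (i+1)), g t|
          ≤ (g (p (i+1)) - g (p i)) * δ := by
      intro i hi
      have hin : i + 1 ≤ n := Finset.mem_range.1 hi
      have h1 : a ≤ p i := hpa i
      have h2 : p i ≤ p (i+1) := hpmono i
      have h3 : p (i+1) ≤ b := hpb _ hin
      have hlen : p (i+1) - p i = δ := by simp only [hp]; push_cast; ring
      have hlo : g (p i) * δ ≤ h (p i) - h (p (i+1)) := hlen ▸ hlow _ _ h1 h2 h3
      have hhi : h (p i) - h (p (i+1)) ≤ g (p (i+1)) * δ := hlen ▸ hhigh _ _ h1 h2 h3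
      have hIlo : g (p i) * δ ≤ ∫ t in (p i)..(p (i+1)), g t := by
        have := intervalIntegral.integral_mono_on h2 intervalIntegrable_const (hgint _ _)
          (fun t ht => hg ht.1)
        simpa [hlen, mul_comm] using this
      have hIhi : (∫ t in (p i)..(p (i+1)), g t) ≤ g (p (i+1)) * δ := by
        have := intervalIntegral.integral_mono_on h2 (hgint _ _) intervalIntegrable_const
          (fun t ht => hg ht.2)
        simpa [hlen, mul_comm] using this
      rw [abs_le]
      constructor <;> nlinarith
    calc |h a - h b - I|
        = |∑ i ∈ Finset.range n, ((h (p i) - h (p (i+1))) - ∫ t in (p i)..(p (i+1)), g t)| := by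
          rw [Finset.sum_sub_distrib, ← hsum1, ← hsum2]
      _ ≤ ∑ i ∈ Finset.range n, |(h (p i) - h (p (i+1))) - ∫ t in (p i)..(p (i+1)), g t| :=
          Finset.abs_sum_le_sum_abs _ _
      _ ≤ ∑ i ∈ Finset.range n, (g (p (i+1)) - g (p i)) * δ := Finset.sum_le_sum hterm
      _ = (g (p n) - g (p 0)) * δ := by
          rw [← Finset.sum_mul, Finset.sum_range_sub (fun i => g (p i))]
      _ = (g b - g a) * (b - a) / n := by
          rw [hpn]; simp only [hp, Nat.cast_zero, zero_mul, add_zero]; rw [hδ]; ring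
  have habs : h a - h b - I = 0 := by
    by_contra hne
    have hpos : 0 < |h a - h b - I| := abs_pos.2 hne
    obtain ⟨n, hn⟩ := exists_nat_gt (max 1 ((g b - g a) * (b - a) / |h a - h b - I|))
    have hn1 : (1:ℝ) < n := lt_of_le_of_lt (le_max_left _ _) hn
    have hn0 : 0 < n := by
      by_contra h
      push_neg at h
      interval_cases n
      norm_num at hn1
    have hncast : (0:ℝ) < n := by exact_mod_cast hn0
    have h1 := key n hn0
    have h2 : (g b - g a) * (b - a) / |h a - h b - I| < n :=
      lt_of_le_of_lt (le_max_right _ _) hn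
    rw [div_lt_iff₀ hpos] at h2
    have h3 : (g b - g a) * (b - a) / n < |h a - h b - I| := by
      rw [div_lt_iff₀ hncast]
      linarith
    linarith
  linarith


/-! ### Switch relations for `isoProj` -/

def innerSet (f : ℝ → ℝ) (x v : ℝ) : Set ℝ :=
  {z : ℝ | ∃ u : ℝ, 0 ≤ u ∧ u ≤ x ∧ u < v ∧ z = (v - u)⁻¹ * ∫ t in u..v, f t}

def outerSet (f : ℝ → ℝ) (x : ℝ) : Set ℝ :=
  {y : ℝ | ∃ v : ℝ, x ≤ v ∧ v ≤ 1 ∧ y = sSup (innerSet f x v)}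

lemma isoProj_eq (f : ℝ → ℝ) (x : ℝ) : _root_.isoProj f x = sInf (outerSet f x) := rfl

lemma M_nonneg (hM : ∀ t, |f t| ≤ M) : 0 ≤ M := (abs_nonneg (f 0)).trans (hM 0)

lemma inner_abs (hM : ∀ t, |f t| ≤ M) {x v : ℝ} : ∀ z ∈ innerSet f x v, |z| ≤ M := by
  rintro z ⟨u, hu0, hux, huv, rfl⟩
  have hnorm : ‖∫ t in u..v, f t‖ ≤ M * |v - u| :=
    intervalIntegral.norm_integral_le_of_norm_le_const (fun t _ => hM t)
  rw [abs_mul, abs_inv]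
  have hvu : 0 < v - u := by linarith
  rw [abs_of_pos hvu] at *
  rw [Real.norm_eq_abs] at hnorm
  calc (v-u)⁻¹ * |∫ t in u..v, f t| ≤ (v-u)⁻¹ * (M * (v-u)) := by
        apply mul_le_mul_of_nonneg_left hnorm (by positivity)
    _ = M := by field_simp
  
lemma inner_bddAbove (hM : ∀ t, |f t| ≤ M) {x v : ℝ} : BddAbove (innerSet f x v) :=
  ⟨M, fun z hz => (abs_le.1 (inner_abs hM z hz)).2⟩

lemma inner_nonempty {x v : ℝ} (hx : 0 ≤ x) (hv : 0 < v) : (innerSet f x v).Nonempty :=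
  ⟨(v - 0)⁻¹ * ∫ t in (0:ℝ)..v, f t, 0, le_rfl, hx, hv, rfl⟩

lemma outer_mem_lb (hM : ∀ t, |f t| ≤ M) {x : ℝ} (hx : 0 ≤ x) :
    ∀ y ∈ outerSet f x, -M ≤ y := by
  rintro y ⟨v, hxv, hv1, rfl⟩
  rcases le_or_gt v 0 with hv | hv
  · have : innerSet f x v = ∅ := by
      ext z
      simp only [innerSet, mem_setOf_eq, mem_empty_iff_false, iff_false]
      rintro ⟨u, hu0, _, huv, _⟩
      linarith
    rw [this]
    simpa [Real.sSup_empty] using neg_nonpos.2 (M_nonneg hM)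
  · obtain ⟨z, hz⟩ := inner_nonempty (f := f) hx hv
    calc -M ≤ z := (abs_le.1 (inner_abs hM z hz)).1
      _ ≤ sSup (innerSet f x v) := le_csSup (inner_bddAbove hM) hz

lemma outer_bddBelow (hM : ∀ t, |f t| ≤ M) {x : ℝ} (hx : 0 ≤ x) :
    BddBelow (outerSet f x) :=
  ⟨-M, fun y hy => outer_mem_lb hM hx y hy⟩

lemma outer_nonempty {x : ℝ} (hx : x ≤ 1) : (outerSet f x).Nonempty :=
  ⟨sSup (innerSet f x 1), 1, hx, le_rfl, rfl⟩


/-- Switch relation, first half: if the last minimizer at level `a` is ≥ x, then `P x ≤ a`. -/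
lemma isoProj_le_of_TX_ge (hf : Continuous f) (hM : ∀ t, |f t| ≤ M) {x a : ℝ}
    (hx0 : 0 < x) (hx1 : x ≤ 1) (hT : x ≤ TX f 1 a) : isoProj f x ≤ a := by
  set v := TX f 1 a with hv
  have hvm := TX_mem hf zero_le_one a
  have hy : sSup (innerSet f x v) ∈ outerSet f x := ⟨v, hT, hvm.1.2, rfl⟩
  rw [isoProj_eq]
  refine (csInf_le (outer_bddBelow hM hx0.le) hy).trans ?_
  refine csSup_le (inner_nonempty hx0.le (hx0.trans_le hT)) ?_
  rintro z ⟨u, hu0, hux, huv, rfl⟩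
  have hmin : phi f a v ≤ phi f a u := hvm.2 u ⟨hu0, hux.trans hx1⟩
  have hsub : IW f v - IW f u = ∫ t in u..v, f t := IW_sub hf u v
  have hvu : 0 < v - u := by linarith
  rw [← hsub]
  rw [inv_mul_le_iff₀ hvu]
  simp only [phi] at hmin
  nlinarith

/-- Switch relation, second half: if the last minimizer at level `a` is < x, then `a ≤ P x`. -/
lemma le_isoProj_of_TX_lt (hf : Continuous f) (hM : ∀ t, |f t| ≤ M) {x a : ℝ}
    (hx0 : 0 < x) (hx1 : x ≤ 1) (hT : TX f 1 a < x) : a ≤ isoProj f x := by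
  rw [isoProj_eq]
  refine le_csInf (outer_nonempty hx1) ?_
  rintro y ⟨v, hxv, hv1, rfl⟩
  set u := TX f 1 a with hu
  have hum := TX_mem hf zero_le_one a
  have huin : u ∈ Icc (0:ℝ) 1 := hum.1
  have hmem : (v - u)⁻¹ * (∫ t in u..v, f t) ∈ innerSet f x v :=
    ⟨u, huin.1, hT.le, hT.trans_le hxv, rfl⟩
  refine le_trans ?_ (le_csSup (inner_bddAbove hM) hmem)
  have hmin : phi f a u ≤ phi f a v := hum.2 v ⟨hx0.le.trans hxv, hv1⟩
  have hsub : IW f v - IW f u = ∫ t in u..v, f t := IW_sub hf u v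
  have hvu : 0 < v - u := by linarith
  rw [← hsub, le_inv_mul_iff₀ hvu]
  simp only [phi] at hmin
  nlinarith

lemma isoProj_le_M (hf : Continuous f) (hM : ∀ t, |f t| ≤ M) {x : ℝ}
    (hx0 : 0 < x) (hx1 : x ≤ 1) : isoProj f x ≤ M :=
  isoProj_le_of_TX_ge hf hM hx0 hx1 (by rw [TX_of_ge hf hM zero_le_one le_rfl]; exact hx1)

lemma neg_M_le_isoProj (hf : Continuous f) (hM : ∀ t, |f t| ≤ M) {x : ℝ}
    (hx0 : 0 < x) (hx1 : x ≤ 1) : -M ≤ isoProj f x := by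
  by_contra h
  push_neg at h
  have ha : (isoProj f x - M) / 2 < -M := by linarith
  have := le_isoProj_of_TX_lt hf hM hx0 hx1 (a := (isoProj f x - M)/2)
    (by rw [TX_of_lt hf hM zero_le_one ha]; exact hx0)
  linarith

/-- `isoProj` is a greatest lower bound of `{a | x ≤ TX f 1 a}` for interior `x`. -/
lemma isoProj_isGLB (hf : Continuous f) (hM : ∀ t, |f t| ≤ M) {x : ℝ}
    (hx0 : 0 < x) (hx1 : x ≤ 1) : IsGLB {a : ℝ | x ≤ TX f 1 a} (isoProj f x) := by
  constructor
  · intro a ha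
    exact isoProj_le_of_TX_ge hf hM hx0 hx1 ha
  · intro q hq
    by_contra h
    push_neg at h
    set a := (isoProj f x + q) / 2 with ha
    have h1 : isoProj f x < a := by simp [ha]; linarith
    have h2 : a < q := by simp [ha]; linarith
    have h3 : a ∉ {a : ℝ | x ≤ TX f 1 a} := fun hmem => absurd (hq hmem) (not_le.2 h2)
    simp only [mem_setOf_eq, not_le] at h3
    exact absurd (le_isoProj_of_TX_lt hf hM hx0 hx1 h3) (not_le.2 h1)

/-- Monotonicity of `isoProj` on `[0,1]` (directly from the definition). -/
lemma isoProj_monotoneOn (hf : Continuous f) (hM : ∀ t, |f t| ≤ M) :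
    MonotoneOn (isoProj f) (Icc 0 1) := by
  intro x hx x' hx' hxx
  rw [isoProj_eq, isoProj_eq]
  refine le_csInf (outer_nonempty hx'.2) ?_
  rintro y' ⟨v, hxv', hv1, rfl⟩
  have hxv : x ≤ v := hxx.trans hxv'
  have hy : sSup (innerSet f x v) ∈ outerSet f x := ⟨v, hxv, hv1, rfl⟩
  refine (csInf_le (outer_bddBelow hM hx.1) hy).trans ?_
  rcases le_or_gt v 0 with hv0 | hv0
  · -- then both inner sets are empty only possible when x = x' = 0 = v; sSup over subset anyway
    have hempty : innerSet f x v = ∅ := by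
      ext z
      simp only [innerSet, mem_setOf_eq, mem_empty_iff_false, iff_false]
      rintro ⟨u, hu0, _, huv, _⟩; linarith
    have hempty' : innerSet f x' v = ∅ := by
      ext z
      simp only [innerSet, mem_setOf_eq, mem_empty_iff_false, iff_false]
      rintro ⟨u, hu0, _, huv, _⟩; linarith
    rw [hempty, hempty']
  · refine csSup_le_csSup (inner_bddAbove hM) (inner_nonempty hx.1 hv0) ?_
    rintro z ⟨u, hu0, hux, huv, rfl⟩
    exact ⟨u, hu0, hux.trans hxx, huv, rfl⟩


lemma neg_M_le_isoProj_zero (hM : ∀ t, |f t| ≤ M) : -M ≤ isoProj f 0 :=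
  le_csInf (outer_nonempty zero_le_one) (outer_mem_lb hM le_rfl)

lemma isoProj_zero_le_M (hf : Continuous f) (hM : ∀ t, |f t| ≤ M) : isoProj f 0 ≤ M := by
  rw [isoProj_eq]
  refine (csInf_le (outer_bddBelow hM le_rfl) ⟨1, zero_le_one, le_rfl, rfl⟩).trans ?_
  exact csSup_le (inner_nonempty le_rfl one_pos)
    (fun z hz => (abs_le.1 (inner_abs hM z hz)).2)

lemma abs_isoProj_le (hf : Continuous f) (hM : ∀ t, |f t| ≤ M) {x : ℝ}
    (hx : x ∈ Icc (0:ℝ) 1) : |isoProj f x| ≤ M := by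
  rcases eq_or_lt_of_le hx.1 with h0 | h0
  · rw [← h0]
    exact abs_le.2 ⟨neg_M_le_isoProj_zero hM, isoProj_zero_le_M hf hM⟩
  · exact abs_le.2 ⟨neg_M_le_isoProj hf hM h0 hx.2, isoProj_le_M hf hM h0 hx.2⟩

/-- Monotone extension of `isoProj f` to all of `ℝ`. -/
noncomputable def Pe (f : ℝ → ℝ) (t : ℝ) : ℝ := isoProj f (max 0 (min t 1))

lemma clamp_mem (t : ℝ) : max 0 (min t 1) ∈ Icc (0:ℝ) 1 :=
  ⟨le_max_left _ _, max_le (zero_le_one) (min_le_right _ _)⟩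

lemma Pe_eq {t : ℝ} (ht : t ∈ Icc (0:ℝ) 1) : Pe f t = isoProj f t := by
  rw [Pe, min_eq_left ht.2, max_eq_right ht.1]

lemma Pe_monotone (hf : Continuous f) (hM : ∀ t, |f t| ≤ M) : Monotone (Pe f) := by
  intro s t hst
  exact isoProj_monotoneOn hf hM (clamp_mem s) (clamp_mem t)
    (max_le_max le_rfl (min_le_min hst le_rfl))

lemma Pe_abs (hf : Continuous f) (hM : ∀ t, |f t| ≤ M) (t : ℝ) : |Pe f t| ≤ M :=
  abs_isoProj_le hf hM (clamp_mem t)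

lemma Pe_measurable (hf : Continuous f) (hM : ∀ t, |f t| ≤ M) : Measurable (Pe f) :=
  (Pe_monotone hf hM).measurable

lemma Pe_switch1 (hf : Continuous f) (hM : ∀ t, |f t| ≤ M) {t a : ℝ}
    (ht0 : 0 < t) (ht1 : t ≤ 1) (h : a < Pe f t) : TX f 1 a < t := by
  by_contra hc
  push_neg at hc
  rw [Pe_eq ⟨ht0.le, ht1⟩] at h
  exact absurd (isoProj_le_of_TX_ge hf hM ht0 ht1 hc) (not_le.2 h)

lemma Pe_switch2 (hf : Continuous f) (hM : ∀ t, |f t| ≤ M) {t a : ℝ}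
    (ht0 : 0 < t) (ht1 : t ≤ 1) (h : TX f 1 a < t) : a ≤ Pe f t := by
  rw [Pe_eq ⟨ht0.le, ht1⟩]
  exact le_isoProj_of_TX_lt hf hM ht0 ht1 h

lemma TX_measurable (hf : Continuous f) : Measurable (TX f 1) :=
  (TX_mono hf zero_le_one).measurable


lemma layer_cake (hf : Continuous f) (hM : ∀ t, |f t| ≤ M) {x : ℝ} (hx : x ∈ Icc (0:ℝ) 1) :
    ∫ t in (0:ℝ)..x, (Pe f t + M) = ∫ a in (-M)..M, (x - min (TX f 1 a) x) := by
  have hM0 : 0 ≤ M := M_nonneg hM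
  set ν := volume.restrict (Ioo (0:ℝ) x) with hν
  set A := volume.restrict (Ioo (-M) M) with hA
  have hPem := Pe_measurable hf hM
  have hTXm := TX_measurable hf
  -- rewrite LHS as a set integral over Ioo 0 x
  have hLHS : ∫ t in (0:ℝ)..x, (Pe f t + M) = ∫ t, (Pe f t + M) ∂ν := by
    rw [intervalIntegral.integral_of_le hx.1, integral_Ioc_eq_integral_Ioo]
  have hRHS : ∫ a in (-M)..M, (x - min (TX f 1 a) x) = ∫ a, (x - min (TX f 1 a) x) ∂A := by
    rw [intervalIntegral.integral_of_le (by linarith), integral_Ioc_eq_integral_Ioo]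
  -- convert to lintegrals
  have hL2 : ∫ t, (Pe f t + M) ∂ν
      = (∫⁻ t, ENNReal.ofReal (Pe f t + M) ∂ν).toReal := by
    refine integral_eq_lintegral_of_nonneg_ae (Filter.Eventually.of_forall fun t => ?_)
      ((hPem.add measurable_const).aestronglyMeasurable)
    have := (abs_le.1 (Pe_abs hf hM t)).1
    simp only [Pi.zero_apply]; linarith
  have hR2 : ∫ a, (x - min (TX f 1 a) x) ∂A
      = (∫⁻ a, ENNReal.ofReal (x - min (TX f 1 a) x) ∂A).toReal := by
    refine integral_eq_lintegral_of_nonneg_ae (Filter.Eventually.of_forall fun a => ?_)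
      ((measurable_const.sub (hTXm.min measurable_const)).aestronglyMeasurable)
    simp only [Pi.zero_apply, sub_nonneg]
    exact min_le_right _ _
  -- pointwise identities in t
  have key_t : ∀ t ∈ Ioo (0:ℝ) x, ENNReal.ofReal (Pe f t + M) = A {a | a < Pe f t} := by
    intro t _
    have h1 : {a | a < Pe f t} ∩ Ioo (-M) M = Ioo (-M) (Pe f t) := by
      ext a
      have h2 := (abs_le.1 (Pe_abs hf hM t)).2
      simp only [mem_inter_iff, mem_setOf_eq, mem_Ioo]
      constructor
      · rintro ⟨h, h', _⟩; exact ⟨h', h⟩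
      · rintro ⟨h', h⟩; exact ⟨h, h', lt_of_lt_of_le h h2⟩
    rw [hA, Measure.restrict_apply (show MeasurableSet {a | a < Pe f t} from measurableSet_Iio),
      h1, Real.volume_Ioo]
    norm_num [add_comm]
  have key_t' : ∀ t, A {a | a ≤ Pe f t} = A {a | a < Pe f t} := by
    intro t
    rw [hA, Measure.restrict_apply (show MeasurableSet {a | a ≤ Pe f t} from measurableSet_Iic),
      Measure.restrict_apply (show MeasurableSet {a | a < Pe f t} from measurableSet_Iio)]
    show volume (Iic (Pe f t) ∩ Ioo (-M) M) = volume (Iio (Pe f t) ∩ Ioo (-M) M)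
    exact measure_congr (MeasureTheory.ae_eq_set_inter
      (MeasureTheory.Iio_ae_eq_Iic (a := Pe f t)).symm (Filter.EventuallyEq.refl _ _))
  -- the two product sets
  have hS1 : MeasurableSet {p : ℝ × ℝ | p.2 < Pe f p.1} :=
    measurableSet_lt measurable_snd (hPem.comp measurable_fst)
  have hS2 : MeasurableSet {p : ℝ × ℝ | p.2 ≤ Pe f p.1} :=
    measurableSet_le measurable_snd (hPem.comp measurable_fst)
  -- Tonelli swaps
  have swap1 : ∫⁻ t, A {a | a < Pe f t} ∂ν = ∫⁻ a, ν {t | a < Pe f t} ∂A := by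
    have hswap := lintegral_lintegral_swap (μ := ν) (ν := A)
      (f := fun t a => ({p : ℝ × ℝ | p.2 < Pe f p.1}).indicator (1 : ℝ × ℝ → ℝ≥0∞) (t, a))
      ((measurable_one.indicator hS1).aemeasurable)
    calc ∫⁻ t, A {a | a < Pe f t} ∂ν
        = ∫⁻ t, ∫⁻ a, ({p : ℝ × ℝ | p.2 < Pe f p.1}).indicator (1 : ℝ × ℝ → ℝ≥0∞) (t, a) ∂A ∂ν := by
          refine lintegral_congr fun t => ?_
          rw [show (fun a => ({p : ℝ × ℝ | p.2 < Pe f p.1}).indicator (1 : ℝ × ℝ → ℝ≥0∞) (t, a))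
              = fun a => ({a | a < Pe f t}).indicator (1 : ℝ → ℝ≥0∞) a from
            funext fun a => by simp [Set.indicator_apply]]
          rw [lintegral_indicator_one (show MeasurableSet {a | a < Pe f t} from measurableSet_Iio)]
      _ = ∫⁻ a, ∫⁻ t, ({p : ℝ × ℝ | p.2 < Pe f p.1}).indicator (1 : ℝ × ℝ → ℝ≥0∞) (t, a) ∂ν ∂A :=
          hswap
      _ = ∫⁻ a, ν {t | a < Pe f t} ∂A := by
          refine lintegral_congr fun a => ?_
          rw [show (fun t => ({p : ℝ × ℝ | p.2 < Pe f p.1}).indicator (1 : ℝ × ℝ → ℝ≥0∞) (t, a))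
              = fun t => ({t | a < Pe f t}).indicator (1 : ℝ → ℝ≥0∞) t from
            funext fun t => by simp [Set.indicator_apply]]
          rw [lintegral_indicator_one (show MeasurableSet {t | a < Pe f t} from hPem measurableSet_Ioi)]
  have swap2 : ∫⁻ t, A {a | a ≤ Pe f t} ∂ν = ∫⁻ a, ν {t | a ≤ Pe f t} ∂A := by
    have hswap := lintegral_lintegral_swap (μ := ν) (ν := A)
      (f := fun t a => ({p : ℝ × ℝ | p.2 ≤ Pe f p.1}).indicator (1 : ℝ × ℝ → ℝ≥0∞) (t, a))
      ((measurable_one.indicator hS2).aemeasurable)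
    calc ∫⁻ t, A {a | a ≤ Pe f t} ∂ν
        = ∫⁻ t, ∫⁻ a, ({p : ℝ × ℝ | p.2 ≤ Pe f p.1}).indicator (1 : ℝ × ℝ → ℝ≥0∞) (t, a) ∂A ∂ν := by
          refine lintegral_congr fun t => ?_
          rw [show (fun a => ({p : ℝ × ℝ | p.2 ≤ Pe f p.1}).indicator (1 : ℝ × ℝ → ℝ≥0∞) (t, a))
              = fun a => ({a | a ≤ Pe f t}).indicator (1 : ℝ → ℝ≥0∞) a from
            funext fun a => by simp [Set.indicator_apply]]
          rw [lintegral_indicator_one (show MeasurableSet {a | a ≤ Pe f t} from measurableSet_Iic)]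
      _ = ∫⁻ a, ∫⁻ t, ({p : ℝ × ℝ | p.2 ≤ Pe f p.1}).indicator (1 : ℝ × ℝ → ℝ≥0∞) (t, a) ∂ν ∂A :=
          hswap
      _ = ∫⁻ a, ν {t | a ≤ Pe f t} ∂A := by
          refine lintegral_congr fun a => ?_
          rw [show (fun t => ({p : ℝ × ℝ | p.2 ≤ Pe f p.1}).indicator (1 : ℝ × ℝ → ℝ≥0∞) (t, a))
              = fun t => ({t | a ≤ Pe f t}).indicator (1 : ℝ → ℝ≥0∞) t from
            funext fun t => by simp [Set.indicator_apply]]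
          rw [lintegral_indicator_one (show MeasurableSet {t | a ≤ Pe f t} from hPem measurableSet_Ici)]
  -- comparisons in a
  have comp1 : ∀ a : ℝ, ν {t | a < Pe f t} ≤ ν {t | TX f 1 a < t} := by
    intro a
    rw [hν, Measure.restrict_apply (show MeasurableSet {t | a < Pe f t} from hPem measurableSet_Ioi),
      Measure.restrict_apply (show MeasurableSet {t | TX f 1 a < t} from measurableSet_Ioi)]
    refine measure_mono fun t ht => ?_
    exact ⟨Pe_switch1 hf hM ht.2.1 (ht.2.2.le.trans hx.2) ht.1, ht.2⟩
  have comp2 : ∀ a : ℝ, ν {t | TX f 1 a < t} ≤ ν {t | a ≤ Pe f t} := by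
    intro a
    rw [hν, Measure.restrict_apply (show MeasurableSet {t | a ≤ Pe f t} from hPem measurableSet_Ici),
      Measure.restrict_apply (show MeasurableSet {t | TX f 1 a < t} from measurableSet_Ioi)]
    refine measure_mono fun t ht => ?_
    exact ⟨Pe_switch2 hf hM ht.2.1 (ht.2.2.le.trans hx.2) ht.1, ht.2⟩
  -- value of the middle measure
  have hmid : ∀ a : ℝ, ν {t | TX f 1 a < t} = ENNReal.ofReal (x - min (TX f 1 a) x) := by
    intro a
    have hT0 : 0 ≤ TX f 1 a := (TX_mem_Icc hf zero_le_one a).1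
    rw [hν, Measure.restrict_apply (show MeasurableSet {t | TX f 1 a < t} from measurableSet_Ioi)]
    have : {t | TX f 1 a < t} ∩ Ioo 0 x = Ioo (TX f 1 a) x := by
      ext t
      simp only [mem_inter_iff, mem_setOf_eq, mem_Ioo]
      constructor
      · rintro ⟨h, _, h3⟩; exact ⟨h, h3⟩
      · rintro ⟨h, h3⟩; exact ⟨h, lt_of_le_of_lt hT0 h, h3⟩
    rw [this, Real.volume_Ioo]
    rcases le_or_gt (TX f 1 a) x with h | h
    · rw [min_eq_left h]
    · rw [min_eq_right h.le]
      rw [ENNReal.ofReal_eq_zero.2 (by linarith), ENNReal.ofReal_eq_zero.2 (by linarith)]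
  -- put the chain together
  have hchain : ∫⁻ t, ENNReal.ofReal (Pe f t + M) ∂ν
      = ∫⁻ a, ENNReal.ofReal (x - min (TX f 1 a) x) ∂A := by
    have e0 : ∫⁻ t, ENNReal.ofReal (Pe f t + M) ∂ν = ∫⁻ t, A {a | a < Pe f t} ∂ν := by
      refine lintegral_congr_ae ?_
      filter_upwards [ae_restrict_mem measurableSet_Ioo] with t ht
      exact key_t t ht
    have e1 : ∫⁻ t, A {a | a < Pe f t} ∂ν = ∫⁻ t, A {a | a ≤ Pe f t} ∂ν :=
      lintegral_congr fun t => (key_t' t).symm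
    have hle1 : ∫⁻ a, ν {t | a < Pe f t} ∂A ≤ ∫⁻ a, ν {t | TX f 1 a < t} ∂A :=
      lintegral_mono fun a => comp1 a
    have hle2 : ∫⁻ a, ν {t | TX f 1 a < t} ∂A ≤ ∫⁻ a, ν {t | a ≤ Pe f t} ∂A :=
      lintegral_mono fun a => comp2 a
    have hcycle : ∫⁻ a, ν {t | a ≤ Pe f t} ∂A = ∫⁻ a, ν {t | a < Pe f t} ∂A := by
      rw [← swap1, ← swap2, e1]
    have hEq : ∫⁻ a, ν {t | TX f 1 a < t} ∂A = ∫⁻ a, ν {t | a < Pe f t} ∂A :=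
      le_antisymm (hcycle ▸ hle2) hle1
    rw [e0, swap1, ← hEq]
    exact lintegral_congr fun a => hmid a
  rw [hLHS, hRHS, hL2, hR2, hchain]


lemma TX_intervalIntegrable (hf : Continuous f) {x : ℝ} (hx : 0 ≤ x) (u v : ℝ) :
    IntervalIntegrable (TX f x) volume u v :=
  ((TX_mono hf hx).monotoneOn _).intervalIntegrable

lemma TX_integral (hf : Continuous f) (hM : ∀ t, |f t| ≤ M) {x : ℝ} (hx : 0 ≤ x) :
    ∫ a in (-M)..M, TX f x a = M * x - IW f x := by
  have h := sandwich_integral (g := TX f x) (h := mm f x) (TX_mono hf hx)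
    (a := -M) (b := M) (by linarith [M_nonneg hM])
    (fun u v _ huv _ => by
      have := envelope_low hf hx huv
      nlinarith [this])
    (fun u v _ huv _ => by
      have := envelope_high hf hx huv
      nlinarith [this])
  rw [← h, mm_at_negM hf hM hx, mm_at_M hf hM hx]
  ring

noncomputable def HH (f : ℝ → ℝ) (x : ℝ) : ℝ := ∫ t in (0:ℝ)..x, Pe f t

noncomputable def DD (f : ℝ → ℝ) (x : ℝ) : ℝ := IW f x - HH f x

lemma Pe_intervalIntegrable (hf : Continuous f) (hM : ∀ t, |f t| ≤ M) (u v : ℝ) :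
    IntervalIntegrable (Pe f) volume u v :=
  ((Pe_monotone hf hM).monotoneOn _).intervalIntegrable

lemma min_TX_intervalIntegrable (hf : Continuous f) (x u v : ℝ) :
    IntervalIntegrable (fun a => min (TX f 1 a) x) volume u v :=
  (((TX_mono hf zero_le_one).min monotone_const).monotoneOn _).intervalIntegrable

lemma HH_eq (hf : Continuous f) (hM : ∀ t, |f t| ≤ M) {x : ℝ} (hx : x ∈ Icc (0:ℝ) 1) :
    HH f x = M * x - ∫ a in (-M)..M, min (TX f 1 a) x := by
  have hM0 : 0 ≤ M := M_nonneg hM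
  have h := layer_cake hf hM hx
  rw [intervalIntegral.integral_add (Pe_intervalIntegrable hf hM 0 x)
    intervalIntegrable_const] at h
  rw [intervalIntegral.integral_sub intervalIntegrable_const
    (min_TX_intervalIntegrable hf x _ _)] at h
  simp only [intervalIntegral.integral_const, smul_eq_mul] at h
  have : HH f x = ∫ t in (0:ℝ)..x, Pe f t := rfl
  rw [this]
  linarith

lemma DD_nonneg (hf : Continuous f) (hM : ∀ t, |f t| ≤ M) {x : ℝ} (hx : x ∈ Icc (0:ℝ) 1) :
    0 ≤ DD f x := by
  have hM0 : 0 ≤ M := M_nonneg hM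
  have h1 : ∫ a in (-M)..M, TX f x a ≤ ∫ a in (-M)..M, min (TX f 1 a) x :=
    intervalIntegral.integral_mono_on (by linarith) (TX_intervalIntegrable hf hx.1 _ _)
      (min_TX_intervalIntegrable hf x _ _) (fun a _ => TX_le_min hf hx.1 hx.2)
  rw [TX_integral hf hM hx.1] at h1
  have h2 := HH_eq hf hM hx
  simp only [DD]
  linarith

lemma DD_one (hf : Continuous f) (hM : ∀ t, |f t| ≤ M) : DD f 1 = 0 := by
  have hM0 : 0 ≤ M := M_nonneg hM
  have h2 := HH_eq hf hM (right_mem_Icc.2 zero_le_one)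
  have h3 : ∫ a in (-M)..M, min (TX f 1 a) 1 = ∫ a in (-M)..M, TX f 1 a :=
    intervalIntegral.integral_congr (fun a _ => min_eq_left (TX_mem_Icc hf zero_le_one a).2)
  rw [h3, TX_integral hf hM zero_le_one] at h2
  simp only [DD]
  linarith

lemma DD_expr (hf : Continuous f) (hM : ∀ t, |f t| ≤ M) {x : ℝ} (hx : x ∈ Icc (0:ℝ) 1) :
    DD f x = ∫ a in (-M)..M, (min (TX f 1 a) x - TX f x a) := by
  rw [intervalIntegral.integral_sub (min_TX_intervalIntegrable hf x _ _)
    (TX_intervalIntegrable hf hx.1 _ _), TX_integral hf hM hx.1]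
  have h2 := HH_eq hf hM hx
  simp only [DD]
  linarith


/-- At a point of contact (a global minimizer of `phi a`), `DD` vanishes. -/
lemma DD_touch (hf : Continuous f) (hM : ∀ t, |f t| ≤ M) {x a : ℝ}
    (hZ : x ∈ ZS f 1 a) : DD f x = 0 := by
  have hx : x ∈ Icc (0:ℝ) 1 := hZ.1
  rw [DD_expr hf hM hx]
  have hzero : ∀ α : ℝ, α ≠ a → min (TX f 1 α) x - TX f x α = 0 := by
    intro α hne
    rcases lt_or_gt_of_ne hne with hlt | hgt
    · -- α < a : all global minimizers of phi α are ≤ x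
      have hkey : ∀ s ∈ Icc (0:ℝ) 1, x < s → phi f α x < phi f α s := by
        intro s hs hxs
        have h1 : phi f a x ≤ phi f a s := hZ.2 s hs
        simp only [phi] at *
        nlinarith
      have hT1 : TX f 1 α ≤ x := by
        by_contra hc
        push_neg at hc
        have hm := TX_mem hf zero_le_one α
        exact absurd (hm.2 x hx) (not_le.2 (hkey _ hm.1 hc))
      rw [TX_one_le hf hx.1 hx.2 hT1, min_eq_left hT1]
      ring
    · -- a < α : phi α has strict min at x among [0,x); minimizers on [0,1] are ≥ x
      have hkey : ∀ s ∈ Icc (0:ℝ) 1, s < x → phi f α x < phi f α s := by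
        intro s hs hsx
        have h1 : phi f a x ≤ phi f a s := hZ.2 s hs
        simp only [phi] at *
        nlinarith
      have hTx : TX f x α = x := by
        have hxZ : x ∈ ZS f x α := by
          refine ⟨⟨hx.1, le_rfl⟩, fun r hr => ?_⟩
          rcases eq_or_lt_of_le hr.2 with h | h
          · rw [h]
          · exact (hkey r ⟨hr.1, hr.2.trans hx.2⟩ h).le
        refine le_antisymm (TX_mem_Icc hf hx.1 α).2 (le_TX hf x α hxZ)
      have hT1 : x ≤ TX f 1 α := by
        have hm := TX_mem hf zero_le_one α
        by_contra hc
        push_neg at hc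
        exact absurd (hm.2 x hx) (not_le.2 (hkey _ hm.1 hc))
      rw [hTx, min_eq_right hT1]
      ring
  have hae : ∀ᵐ α ∂volume, α ∈ Set.uIoc (-M) M → min (TX f 1 α) x - TX f x α = 0 := by
    have hsing : ∀ᵐ α ∂(volume : Measure ℝ), α ≠ a := by
      rw [MeasureTheory.ae_iff]
      have : {α : ℝ | ¬α ≠ a} = {a} := by ext α; simp
      rw [this]
      exact measure_singleton a
    filter_upwards [hsing] with α hα _
    exact hzero α hα
  calc ∫ α in (-M)..M, (min (TX f 1 α) x - TX f x α)
      = ∫ α in (-M)..M, (0:ℝ) := intervalIntegral.integral_congr_ae hae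
    _ = 0 := intervalIntegral.integral_zero


/-- Where `DD > 0`, `Pe` is locally constant. -/
lemma Pe_locally_const (hf : Continuous f) (hM : ∀ t, |f t| ≤ M) {x₀ : ℝ}
    (hx₀ : x₀ ∈ Ioo (0:ℝ) 1) (hD : 0 < DD f x₀) :
    ∃ ε > 0, Ioo (x₀ - ε) (x₀ + ε) ⊆ Ioo 0 1 ∧
      ∀ y ∈ Ioo (x₀ - ε) (x₀ + ε), ∀ z ∈ Ioo (x₀ - ε) (x₀ + ε), Pe f y = Pe f z := by
  set S : Set (ℝ × ℝ) := (Icc (-M) M ×ˢ Icc (0:ℝ) 1) ∩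
    ⋂ r ∈ Icc (0:ℝ) 1, {p : ℝ × ℝ | phi f p.1 p.2 ≤ phi f p.1 r} with hS
  have hphi_cont : ∀ r : ℝ, Continuous fun p : ℝ × ℝ => phi f p.1 p.2 - phi f p.1 r := by
    intro r
    have h1 : Continuous fun p : ℝ × ℝ => phi f p.1 p.2 :=
      ((IW_cont hf).comp continuous_snd).sub (continuous_fst.mul continuous_snd)
    have h2 : Continuous fun p : ℝ × ℝ => phi f p.1 r :=
      continuous_const.sub (continuous_fst.mul continuous_const)
    exact h1.sub h2
  have hScl : IsClosed S := by
    refine (isClosed_Icc.prod isClosed_Icc).inter (isClosed_biInter fun r _ => ?_)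
    have : {p : ℝ × ℝ | phi f p.1 p.2 ≤ phi f p.1 r}
        = (fun p : ℝ × ℝ => phi f p.1 p.2 - phi f p.1 r) ⁻¹' Iic 0 := by
      ext p; simp [sub_nonpos]
    rw [this]
    exact IsClosed.preimage (hphi_cont r) isClosed_Iic
  have hScpt : IsCompact S :=
    ((isCompact_Icc.prod isCompact_Icc).of_isClosed_subset hScl inter_subset_left)
  set C : Set ℝ := Prod.snd '' S with hC
  have hCcl : IsClosed (C) := (hScpt.image continuous_snd).isClosed
  have hx₀C : x₀ ∉ C := by
    rintro ⟨p, hp, rfl⟩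
    have hZ : p.2 ∈ ZS f 1 p.1 := by
      refine ⟨(hp.1 : p ∈ _ ×ˢ _).2, fun r hr => ?_⟩
      have := hp.2
      simp only [Set.mem_iInter, mem_setOf_eq] at this
      exact this r hr
    exact absurd (DD_touch hf hM hZ) (ne_of_gt hD)
  obtain ⟨ε₀, hε₀, hball⟩ := Metric.isOpen_iff.1 hCcl.isOpen_compl x₀ hx₀C
  set ε := min ε₀ (min x₀ (1 - x₀)) with hε
  have hεpos : 0 < ε := lt_min hε₀ (lt_min hx₀.1 (by linarith [hx₀.2]))
  have hsub : Ioo (x₀ - ε) (x₀ + ε) ⊆ Ioo 0 1 := by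
    intro y hy
    have h1 : ε ≤ x₀ := (min_le_right _ _).trans (min_le_left _ _)
    have h2 : ε ≤ 1 - x₀ := (min_le_right _ _).trans (min_le_right _ _)
    exact ⟨by linarith [hy.1], by linarith [hy.2]⟩
  have hballsub : Ioo (x₀ - ε) (x₀ + ε) ⊆ Metric.ball x₀ ε₀ := by
    intro y hy
    rw [Metric.mem_ball, Real.dist_eq, abs_lt]
    have h1 : ε ≤ ε₀ := min_le_left _ _
    constructor <;> [linarith [hy.1]; linarith [hy.2]]
  have hnoT : ∀ a : ℝ, TX f 1 a ∉ Ioo (x₀ - ε) (x₀ + ε) := by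
    intro a hmem
    rcases le_or_gt a (-M) with h1 | h1
    · rcases eq_or_lt_of_le h1 with h1' | h1'
      · -- a = -M : TX f 1 a ∈ ZS, and a ∈ Icc (-M) M, contradiction with C
        have hTZ := TX_mem hf zero_le_one a
        have : TX f 1 a ∈ C := ⟨(a, TX f 1 a), ⟨⟨by
            constructor
            · exact le_of_eq h1'.symm
            · linarith [M_nonneg hM], hTZ.1⟩, by
            simp only [Set.mem_iInter, mem_setOf_eq]
            exact fun r hr => hTZ.2 r hr⟩, rfl⟩
        exact hball (hballsub hmem) this
      · rw [TX_of_lt hf hM zero_le_one h1'] at hmem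
        exact absurd hmem (fun h => absurd (hsub h).1 (lt_irrefl 0))
    · rcases le_or_gt M a with h2 | h2
      · rw [TX_of_ge hf hM zero_le_one h2] at hmem
        exact absurd (hsub hmem).2 (lt_irrefl 1)
      · -- a ∈ (-M, M)
        have hTZ := TX_mem hf zero_le_one a
        have hmemC : TX f 1 a ∈ C := ⟨(a, TX f 1 a), ⟨⟨⟨h1.le, h2.le⟩, hTZ.1⟩, by
            simp only [Set.mem_iInter, mem_setOf_eq]
            exact fun r hr => hTZ.2 r hr⟩, rfl⟩
        exact hball (hballsub hmem) hmemC
  refine ⟨ε, hεpos, hsub, ?_⟩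
  -- Pe is constant on the interval
  have hconst : ∀ y ∈ Ioo (x₀ - ε) (x₀ + ε), ∀ z ∈ Ioo (x₀ - ε) (x₀ + ε),
      y ≤ z → Pe f y = Pe f z := by
    intro y hy z hz hyz
    have hyI := hsub hy
    have hzI := hsub hz
    have hsets : {a : ℝ | y ≤ TX f 1 a} = {a : ℝ | z ≤ TX f 1 a} := by
      ext a
      simp only [mem_setOf_eq]
      constructor
      · intro h
        have hnot := hnoT a
        simp only [mem_Ioo, not_and_or, not_lt] at hnot
        rcases hnot with h' | h'
        · linarith [hy.1]
        · linarith [hz.2]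
      · intro h
        exact hyz.trans h
    have hy' := isoProj_isGLB hf hM hyI.1 hyI.2.le
    have hz' := isoProj_isGLB hf hM hzI.1 hzI.2.le
    rw [hsets] at hy'
    rw [Pe_eq ⟨hyI.1.le, hyI.2.le⟩, Pe_eq ⟨hzI.1.le, hzI.2.le⟩]
    exact hy'.unique hz'
  intro y hy z hz
  rcases le_total y z with h | h
  · exact hconst y hy z hz h
  · exact (hconst z hz y hy h).symm


/-- The Stieltjes measure of (the right-continuous version of) `Pe` gives no mass
to the set where `DD > 0`. -/
lemma stieltjes_null (hf : Continuous f) (hM : ∀ t, |f t| ≤ M) :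
    (Pe_monotone hf hM).stieltjesFunction.measure {x ∈ Ioo (0:ℝ) 1 | 0 < DD f x} = 0 := by
  set PS := (Pe_monotone hf hM).stieltjesFunction with hPS
  set U := {x ∈ Ioo (0:ℝ) 1 | 0 < DD f x} with hU
  refine measure_null_of_locally_null U fun x₀ hx₀ => ?_
  obtain ⟨ε, hε, hsub, hconst⟩ := Pe_locally_const hf hM hx₀.1 hx₀.2
  refine ⟨Ioc (x₀ - ε/2) (x₀ + ε/2), ?_, ?_⟩
  · refine mem_nhdsWithin_of_mem_nhds ?_
    refine Filter.mem_of_superset (Ioo_mem_nhds (by linarith) (by linarith)) Ioo_subset_Ioc_self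
  · have hmem : ∀ y ∈ Icc (x₀ - ε/2) (x₀ + ε/2), y ∈ Ioo (x₀ - ε) (x₀ + ε) := by
      intro y hy
      constructor <;> [linarith [hy.1]; linarith [hy.2]]
    -- PS is constant on the closed middle interval
    have hPSconst : ∀ y ∈ Icc (x₀ - ε/2) (x₀ + ε/2), PS y = Pe f x₀ := by
      intro y hy
      have hy' := hmem y hy
      have : Function.rightLim (Pe f) y = Pe f x₀ := by
        refine rightLim_eq_of_tendsto ?_
        have hev : ∀ᶠ z in nhdsWithin y (Ioi y), Pe f z = Pe f x₀ := by
          have hIoo : Ioo y (x₀ + ε) ∈ nhdsWithin y (Ioi y) :=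
            Ioo_mem_nhdsGT_of_mem ⟨le_refl y, hy'.2⟩
          filter_upwards [hIoo] with z hz
          exact hconst z ⟨lt_trans hy'.1 hz.1, hz.2⟩ x₀ ⟨by linarith, by linarith⟩
        exact Filter.Tendsto.congr' (Filter.EventuallyEq.symm hev) tendsto_const_nhds
      rw [hPS, (Pe_monotone hf hM).stieltjesFunction_eq, this]
    rw [show (PS.measure (Ioc (x₀ - ε/2) (x₀ + ε/2))) =
      ENNReal.ofReal (PS (x₀ + ε/2) - PS (x₀ - ε/2)) from PS.measure_Ioc _ _]
    rw [hPSconst _ ⟨by linarith, by linarith⟩, hPSconst _ ⟨by linarith, by linarith⟩]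
    simp

/-- `DD` integrates to zero against the Stieltjes measure of `Pe`. -/
lemma DD_stieltjes_integral_zero (hf : Continuous f) (hM : ∀ t, |f t| ≤ M) :
    ∫ s in Ioc (0:ℝ) 1, DD f s ∂(Pe_monotone hf hM).stieltjesFunction.measure = 0 := by
  set μ := (Pe_monotone hf hM).stieltjesFunction.measure with hμ
  have hae : DD f =ᵐ[μ.restrict (Ioc (0:ℝ) 1)] 0 := by
    rw [Filter.EventuallyEq, ae_restrict_iff' measurableSet_Ioc]
    rw [MeasureTheory.ae_iff]
    refine measure_mono_null (fun s hs => ?_) (stieltjes_null hf hM)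
    simp only [mem_setOf_eq, not_forall] at hs
    obtain ⟨hs1, hs2⟩ := hs
    have hge := DD_nonneg hf hM (Ioc_subset_Icc_self hs1 : s ∈ Icc (0:ℝ) 1)
    have hpos : 0 < DD f s := lt_of_le_of_ne hge (fun h => hs2 (by simp [← h]))
    have hne1 : s ≠ 1 := by
      intro h
      rw [h, DD_one hf hM] at hpos
      exact lt_irrefl 0 hpos
    exact ⟨⟨hs1.1, lt_of_le_of_ne hs1.2 hne1⟩, hpos⟩
  calc ∫ s in Ioc (0:ℝ) 1, DD f s ∂μ = ∫ s in Ioc (0:ℝ) 1, (0:ℝ) ∂μ := integral_congr_ae hae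
    _ = 0 := by simp


lemma key_functional (hf : Continuous f) (hM : ∀ t, |f t| ≤ M) (g : StieltjesFunction ℝ) :
    ∫ t in Ioc (0:ℝ) 1, (f t - Pe f t) * g t =
      - ∫ s in Ioc (0:ℝ) 1, DD f s ∂g.measure := by
  have hM0 : 0 ≤ M := M_nonneg hM
  set ρ := volume.restrict (Ioc (0:ℝ) 1) with hρ
  set μ := g.measure.restrict (Ioc (0:ℝ) 1) with hμ
  have hμfin : IsFiniteMeasure μ := by
    constructor
    rw [hμ, Measure.restrict_apply_univ, g.measure_Ioc]
    exact ENNReal.ofReal_lt_top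
  have hfm : Measurable f := hf.measurable
  have hPem := Pe_measurable hf hM
  have hgm : Measurable (g : ℝ → ℝ) := g.mono.measurable
  have hbound : ∀ t, |f t - Pe f t| ≤ 2 * M := by
    intro t
    have h1 := hM t
    have h2 := Pe_abs hf hM t
    rw [abs_le] at *
    constructor <;> [linarith [h1.1, h2.2]; linarith [h1.2, h2.1]]
  have hfPe_int : Integrable (fun t => f t - Pe f t) ρ := by
    refine Integrable.mono' (integrable_const (2*M)) ((hfm.sub hPem).aestronglyMeasurable) ?_
    exact Filter.Eventually.of_forall fun t => by rw [Real.norm_eq_abs]; exact hbound t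
  -- μ (Iic t) for t ∈ Ioc 0 1
  have hμIic : ∀ t ∈ Ioc (0:ℝ) 1, (μ (Iic t)).toReal = g t - g 0 := by
    intro t ht
    rw [hμ, Measure.restrict_apply measurableSet_Iic]
    have : Iic t ∩ Ioc 0 1 = Ioc 0 t := by
      ext s
      simp only [mem_inter_iff, mem_Iic, mem_Ioc]
      exact ⟨fun ⟨h1, h2, _⟩ => ⟨h2, h1⟩, fun ⟨h1, h2⟩ => ⟨h2, h1, h2.trans ht.2⟩⟩
    rw [this, g.measure_Ioc, ENNReal.toReal_ofReal (by linarith [g.mono ht.1.le] : (0:ℝ) ≤ g t - g 0)]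
  -- split the integrand
  have hsplit : ∫ t, (f t - Pe f t) * g t ∂ρ
      = ∫ t, (f t - Pe f t) * g 0 ∂ρ + ∫ t, (f t - Pe f t) * (g t - g 0) ∂ρ := by
    rw [← integral_add (hfPe_int.mul_const _)]
    · exact integral_congr_ae (Filter.Eventually.of_forall fun t => by ring)
    · refine Integrable.mono' (integrable_const (2*M*(|g 1| + |g 0|)))
        (((hfm.sub hPem).mul (hgm.sub measurable_const)).aestronglyMeasurable) ?_
      rw [hρ]
      filter_upwards [ae_restrict_mem measurableSet_Ioc] with t ht
      rw [Real.norm_eq_abs, abs_mul]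
      have h1 : |g t - g 0| ≤ |g 1| + |g 0| := by
        have h2 := g.mono ht.1.le
        have h3 := g.mono ht.2
        rw [abs_le]
        constructor
        · linarith [abs_nonneg (g (1:ℝ)), abs_nonneg (g (0:ℝ))]
        · linarith [le_abs_self (g (1:ℝ)), neg_abs_le (g (0:ℝ))]
      have h4 := hbound t
      have h5 : (0:ℝ) ≤ |g t - g 0| := abs_nonneg _
      nlinarith [abs_nonneg (f t - Pe f t)]
  -- first piece
  have hT1 : ∫ t, (f t - Pe f t) * g 0 ∂ρ = 0 := by
    rw [integral_mul_const]
    have : ∫ t, (f t - Pe f t) ∂ρ = DD f 1 := by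
      have h1 : ∫ t, (f t - Pe f t) ∂ρ
          = (∫ t in Ioc (0:ℝ) 1, f t) - ∫ t in Ioc (0:ℝ) 1, Pe f t := by
        rw [hρ]
        exact integral_sub (hf.integrableOn_Ioc) (Pe_intervalIntegrable hf hM 0 1).1
      rw [h1, DD]
      rw [show IW f 1 = ∫ t in (0:ℝ)..1, f t from rfl, show HH f 1 = ∫ t in (0:ℝ)..1, Pe f t from rfl]
      rw [intervalIntegral.integral_of_le zero_le_one, intervalIntegral.integral_of_le zero_le_one]
    rw [this, DD_one hf hM, zero_mul]
  -- second piece: Fubini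
  have hT2 : ∫ t, (f t - Pe f t) * (g t - g 0) ∂ρ = - ∫ s, DD f s ∂μ := by
    set q : ℝ → ℝ → ℝ := fun t s => (f t - Pe f t) *
      ({p : ℝ × ℝ | p.2 ≤ p.1}.indicator (1 : ℝ × ℝ → ℝ) (t, s)) with hq
    have hqm : Measurable (Function.uncurry q) := by
      exact ((hfm.sub hPem).comp measurable_fst).mul
        (measurable_one.indicator (measurableSet_le measurable_snd measurable_fst))
    have hqint : Integrable (Function.uncurry q) (ρ.prod μ) := by
      refine Integrable.mono' (integrable_const (2*M)) hqm.aestronglyMeasurable ?_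
      refine Filter.Eventually.of_forall fun p => ?_
      rw [Real.norm_eq_abs, Function.uncurry, hq]
      simp only [Set.indicator_apply, mem_setOf_eq, Pi.one_apply]
      rcases le_or_gt p.2 p.1 with h | h
      · rw [if_pos h, mul_one]; exact hbound p.1
      · rw [if_neg (not_le.2 h), mul_zero, abs_zero]; linarith
    have hinner_t : ∀ t ∈ Ioc (0:ℝ) 1, ∫ s, q t s ∂μ = (f t - Pe f t) * (g t - g 0) := by
      intro t ht
      rw [hq]
      simp only
      rw [MeasureTheory.integral_const_mul]
      have : (fun s => ({p : ℝ × ℝ | p.2 ≤ p.1}.indicator (1 : ℝ × ℝ → ℝ) (t, s)))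
          = (Iic t).indicator (fun _ => (1:ℝ)) := by
        funext s
        simp [Set.indicator_apply, mem_Iic]
      rw [this, integral_indicator_const (1:ℝ) measurableSet_Iic]
      rw [smul_eq_mul, mul_one, measureReal_def, hμIic t ht]
    have hinner_s : ∀ s ∈ Ioc (0:ℝ) 1, ∫ t, q t s ∂ρ = - DD f s := by
      intro s hs
      have : (fun t => q t s) = (Ici s).indicator (fun t => f t - Pe f t) := by
        funext t
        rw [hq]
        simp only [Set.indicator_apply, mem_setOf_eq, mem_Ici, Pi.one_apply, mul_ite, mul_one,
          mul_zero]
      rw [this, integral_indicator measurableSet_Ici, hρ,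
        Measure.restrict_restrict measurableSet_Ici]
      have hIcc : Ici s ∩ Ioc 0 1 = Icc s 1 := by
        ext t
        simp only [mem_inter_iff, mem_Ici, mem_Ioc, mem_Icc]
        exact ⟨fun ⟨h1, _, h3⟩ => ⟨h1, h3⟩, fun ⟨h1, h2⟩ => ⟨h1, hs.1.trans_le h1, h2⟩⟩
      rw [hIcc, integral_Icc_eq_integral_Ioc]
      have h1 : ∫ t in Ioc s 1, (f t - Pe f t)
          = ((IW f 1 - IW f s) - (HH f 1 - HH f s)) := by
        rw [← intervalIntegral.integral_of_le hs.2]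
        rw [intervalIntegral.integral_sub (hf.intervalIntegrable _ _)
          (Pe_intervalIntegrable hf hM _ _)]
        rw [show IW f 1 - IW f s = ∫ t in s..1, f t from IW_sub hf s 1]
        have : HH f 1 - HH f s = ∫ t in s..1, Pe f t := by
          rw [show HH f 1 = ∫ t in (0:ℝ)..1, Pe f t from rfl,
            show HH f s = ∫ t in (0:ℝ)..s, Pe f t from rfl]
          rw [intervalIntegral.integral_interval_sub_left (Pe_intervalIntegrable hf hM _ _)
            (Pe_intervalIntegrable hf hM _ _)]
        rw [this]
      rw [h1]
      have h2 : IW f 1 - HH f 1 = 0 := DD_one hf hM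
      simp only [DD]
      linarith
    calc ∫ t, (f t - Pe f t) * (g t - g 0) ∂ρ
        = ∫ t, ∫ s, q t s ∂μ ∂ρ := by
          rw [hρ]
          refine integral_congr_ae ?_
          filter_upwards [ae_restrict_mem measurableSet_Ioc] with t ht
          exact (hinner_t t ht).symm
      _ = ∫ s, ∫ t, q t s ∂ρ ∂μ := integral_integral_swap hqint
      _ = ∫ s, - DD f s ∂μ := by
          rw [hμ]
          refine integral_congr_ae ?_
          filter_upwards [ae_restrict_mem measurableSet_Ioc] with s hs
          exact hinner_s s hs
      _ = - ∫ s, DD f s ∂μ := integral_neg _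
  rw [hsplit, hT1, hT2, zero_add]


/-- The right-continuous regularization agrees with `Pe` a.e. (w.r.t. Lebesgue). -/
lemma stieltjes_ae_eq (hf : Continuous f) (hM : ∀ t, |f t| ≤ M) :
    (fun t => ((Pe_monotone hf hM).stieltjesFunction : ℝ → ℝ) t) =ᵐ[(volume : Measure ℝ)]
      Pe f := by
  have hcount : Set.Countable {t : ℝ | ¬ContinuousAt (Pe f) t} :=
    (Pe_monotone hf hM).countable_not_continuousAt
  rw [Filter.EventuallyEq, MeasureTheory.ae_iff]
  refine measure_mono_null (fun t ht => ?_) (hcount.measure_zero _)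
  simp only [mem_setOf_eq] at *
  intro hcont
  apply ht
  rw [(Pe_monotone hf hM).stieltjesFunction_eq]
  refine rightLim_eq_of_tendsto ?_
  exact hcont.tendsto.mono_left nhdsWithin_le_nhds

lemma J_P_eq_zero (hf : Continuous f) (hM : ∀ t, |f t| ≤ M) :
    ∫ t in Ioc (0:ℝ) 1, (f t - Pe f t) * Pe f t = 0 := by
  have h1 := key_functional hf hM (Pe_monotone hf hM).stieltjesFunction
  rw [DD_stieltjes_integral_zero hf hM, neg_zero] at h1
  have h2 : (fun t => ((Pe_monotone hf hM).stieltjesFunction : ℝ → ℝ) t)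
      =ᵐ[volume.restrict (Ioc (0:ℝ) 1)] Pe f := ae_restrict_of_ae (stieltjes_ae_eq hf hM)
  have h3 : (fun t => (f t - Pe f t) * Pe f t)
      =ᵐ[volume.restrict (Ioc (0:ℝ) 1)]
      (fun t => (f t - Pe f t) * ((Pe_monotone hf hM).stieltjesFunction : ℝ → ℝ) t) := by
    filter_upwards [h2] with t ht
    rw [ht]
  exact (integral_congr_ae h3).trans h1

lemma isoProj_congr {w₁ w₂ : ℝ → ℝ} (h : EqOn w₁ w₂ (Icc 0 1)) {x : ℝ}
    (hx : x ∈ Icc (0:ℝ) 1) : isoProj w₁ x = isoProj w₂ x := by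
  have hsets : ∀ v : ℝ, x ≤ v → v ≤ 1 →
      {z : ℝ | ∃ u : ℝ, 0 ≤ u ∧ u ≤ x ∧ u < v ∧ z = (v - u)⁻¹ * ∫ t in u..v, w₁ t}
      = {z : ℝ | ∃ u : ℝ, 0 ≤ u ∧ u ≤ x ∧ u < v ∧ z = (v - u)⁻¹ * ∫ t in u..v, w₂ t} := by
    intro v hxv hv1
    ext z
    refine exists_congr fun u => and_congr_right fun hu0 => and_congr_right fun hux =>
      and_congr_right fun huv => ?_
    have hint : ∫ t in u..v, w₁ t = ∫ t in u..v, w₂ t := by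
      refine intervalIntegral.integral_congr (fun t ht => h ?_)
      rw [uIcc_of_le huv.le] at ht
      exact ⟨hu0.trans ht.1, ht.2.trans hv1⟩
    rw [hint]
  unfold isoProj
  congr 1
  ext y
  refine exists_congr fun v => and_congr_right fun hxv => and_congr_right fun hv1 => ?_
  rw [hsets v hxv hv1]


end IsoAux

/-- The isotonic projection `P_w` minimizes the `L²` distance to `w` over the set of
continuous nondecreasing functions on `[0,1]`. -/
theorem isoProj_minimizes (w : ℝ → ℝ) (hw : ContinuousOn w (Icc 0 1)) :
    ∀ F : ℝ → ℝ, ContinuousOn F (Icc 0 1) → MonotoneOn F (Icc 0 1) →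
      ∫ t in (0:ℝ)..1, (w t - isoProj w t) ^ 2 ≤ ∫ t in (0:ℝ)..1, (w t - F t) ^ 2 := by
  open IsoAux in
  intro F hF hFmono
  set cl : ℝ → ℝ := fun t => max 0 (min t 1) with hcl
  have hclcont : Continuous cl := continuous_const.max (continuous_id.min continuous_const)
  have hclmem : ∀ t, cl t ∈ Icc (0:ℝ) 1 := fun t => clamp_mem t
  have hclmono : Monotone cl := fun a b hab => max_le_max le_rfl (min_le_min hab le_rfl)
  have hcleq : ∀ t ∈ Icc (0:ℝ) 1, cl t = t := by
    intro t ht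
    rw [hcl]
    simp only
    rw [min_eq_left ht.2, max_eq_right ht.1]
  set f : ℝ → ℝ := w ∘ cl with hfdef
  have hfc : Continuous f := hw.comp_continuous hclcont hclmem
  obtain ⟨C, hC⟩ := isCompact_Icc.exists_bound_of_continuousOn hw
  set M : ℝ := max C 0 with hMdef
  have hM : ∀ t, |f t| ≤ M := fun t =>
    le_trans (by simpa [Real.norm_eq_abs, hfdef] using hC (cl t) (hclmem t)) (le_max_left _ _)
  have hEqw : EqOn w f (Icc 0 1) := fun t ht => by
    simp only [hfdef, Function.comp_apply, hcleq t ht]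
  set Fe : ℝ → ℝ := F ∘ cl with hFedef
  have hFec : Continuous Fe := hF.comp_continuous hclcont hclmem
  have hFemono : Monotone Fe := fun a b hab => hFmono (hclmem a) (hclmem b) (hclmono hab)
  have hEqF : EqOn F Fe (Icc 0 1) := fun t ht => by
    simp only [hFedef, Function.comp_apply, hcleq t ht]
  set gF : StieltjesFunction ℝ :=
    ⟨Fe, hFemono, fun x => hFec.continuousAt.continuousWithinAt⟩ with hgF
  set P : ℝ → ℝ := Pe f with hPdef
  set ρ : Measure ℝ := volume.restrict (Ioc (0:ℝ) 1) with hρ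
  have hρfin : IsFiniteMeasure ρ := by
    constructor
    rw [hρ, Measure.restrict_apply_univ, Real.volume_Ioc]
    exact ENNReal.ofReal_lt_top
  have hint : ∀ (h : ℝ → ℝ), Measurable h → ∀ B : ℝ, (∀ t, |h t| ≤ B) → Integrable h ρ :=
    fun h hm B hB => Integrable.mono' (integrable_const B) hm.aestronglyMeasurable
      (Filter.Eventually.of_forall fun t => by rw [Real.norm_eq_abs]; exact hB t)
  set NB : ℝ := max |F 0| |F 1| with hNB
  have hFeB : ∀ t, |Fe t| ≤ NB := by
    intro t
    have h1 : F 0 ≤ Fe t := hFmono (left_mem_Icc.2 zero_le_one) (hclmem t) (hclmem t).1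
    have h2 : Fe t ≤ F 1 := hFmono (hclmem t) (right_mem_Icc.2 zero_le_one) (hclmem t).2
    rw [abs_le]
    constructor
    · calc -NB ≤ -|F 0| := neg_le_neg (le_max_left _ _)
        _ ≤ F 0 := neg_abs_le _
        _ ≤ Fe t := h1
    · calc Fe t ≤ F 1 := h2
        _ ≤ |F 1| := le_abs_self _
        _ ≤ NB := le_max_right _ _
  have hPB : ∀ t, |P t| ≤ M := fun t => Pe_abs hfc hM t
  have hPm : Measurable P := Pe_measurable hfc hM
  have hFem : Measurable Fe := hFec.measurable
  have hfm : Measurable f := hfc.measurable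
  have hfB : ∀ t, |f t - P t| ≤ 2 * M := by
    intro t
    have h1 := abs_le.1 (hM t)
    have h2 := abs_le.1 (hPB t)
    rw [abs_le]
    constructor <;> [linarith [h1.1, h2.2]; linarith [h1.2, h2.1]]
  have hPFeB : ∀ t, |P t - Fe t| ≤ M + NB := by
    intro t
    have h1 := abs_le.1 (hPB t)
    have h2 := abs_le.1 (hFeB t)
    rw [abs_le]
    constructor <;> [linarith [h1.1, h2.2]; linarith [h1.2, h2.1]]
  have hM0 : (0:ℝ) ≤ M := M_nonneg hM
  have hNB0 : (0:ℝ) ≤ NB := (abs_nonneg _).trans (le_max_left _ _)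
  -- the two key functionals
  have hJP : ∫ t in Ioc (0:ℝ) 1, (f t - P t) * P t = 0 := J_P_eq_zero hfc hM
  have hJF : ∫ t in Ioc (0:ℝ) 1, (f t - P t) * Fe t ≤ 0 := by
    have h1 := key_functional hfc hM gF
    have hcoe : ((gF : StieltjesFunction ℝ) : ℝ → ℝ) = Fe := rfl
    rw [hcoe] at h1
    rw [hPdef, h1, neg_nonpos]
    refine setIntegral_nonneg measurableSet_Ioc fun s hs => ?_
    exact DD_nonneg hfc hM (Ioc_subset_Icc_self hs)
  have hcore : 0 ≤ ∫ t in Ioc (0:ℝ) 1, (f t - P t) * (P t - Fe t) := by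
    have h1 : ∫ t in Ioc (0:ℝ) 1, (f t - P t) * (P t - Fe t)
        = (∫ t in Ioc (0:ℝ) 1, (f t - P t) * P t)
          - ∫ t in Ioc (0:ℝ) 1, (f t - P t) * Fe t := by
      rw [← integral_sub]
      · refine integral_congr_ae (Filter.Eventually.of_forall fun t => by ring)
      · refine hint _ ((hfm.sub hPm).mul hPm) (2*M*M) fun t => ?_
        rw [abs_mul]
        exact mul_le_mul (hfB t) (hPB t) (abs_nonneg _) (by linarith)
      · refine hint _ ((hfm.sub hPm).mul hFem) (2*M*NB) fun t => ?_
        rw [abs_mul]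
        exact mul_le_mul (hfB t) (hFeB t) (abs_nonneg _) (by linarith)
    rw [h1, hJP]
    linarith
  -- rewrite the two goal integrals
  have hL : ∫ t in (0:ℝ)..1, (w t - isoProj w t) ^ 2 = ∫ t in Ioc (0:ℝ) 1, (f t - P t) ^ 2 := by
    rw [intervalIntegral.integral_of_le zero_le_one]
    refine setIntegral_congr_fun measurableSet_Ioc fun t ht => ?_
    have htI : t ∈ Icc (0:ℝ) 1 := Ioc_subset_Icc_self ht
    rw [hEqw htI, isoProj_congr hEqw htI, hPdef, Pe_eq htI]
  have hR : ∫ t in (0:ℝ)..1, (w t - F t) ^ 2 = ∫ t in Ioc (0:ℝ) 1, (f t - Fe t) ^ 2 := by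
    rw [intervalIntegral.integral_of_le zero_le_one]
    refine setIntegral_congr_fun measurableSet_Ioc fun t ht => ?_
    have htI : t ∈ Icc (0:ℝ) 1 := Ioc_subset_Icc_self ht
    rw [hEqw htI, hEqF htI]
  rw [hL, hR]
  -- expand the square
  have hsq1 : Integrable (fun t => (f t - P t) ^ 2) ρ := by
    refine hint _ ((hfm.sub hPm).pow_const 2) ((2*M)^2) fun t => ?_
    rw [abs_pow]
    exact pow_le_pow_left₀ (abs_nonneg _) (hfB t) 2
  have hcross1 : Integrable (fun t => 2*((f t - P t)*(P t - Fe t))) ρ := by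
    refine hint _ (measurable_const.mul ((hfm.sub hPm).mul (hPm.sub hFem)))
      (2*(2*M*(M+NB))) fun t => ?_
    rw [abs_mul, abs_two]
    have h1 : |(f t - P t)*(P t - Fe t)| ≤ 2*M*(M+NB) := by
      rw [abs_mul]
      exact mul_le_mul (hfB t) (hPFeB t) (abs_nonneg _) (by linarith)
    linarith
  have hsq2 : Integrable (fun t => (P t - Fe t) ^ 2) ρ := by
    refine hint _ ((hPm.sub hFem).pow_const 2) ((M+NB)^2) fun t => ?_
    rw [abs_pow]
    exact pow_le_pow_left₀ (abs_nonneg _) (hPFeB t) 2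
  have hAdd2 : Integrable (fun t => 2*((f t - P t)*(P t - Fe t)) + (P t - Fe t)^2) ρ :=
    hcross1.add hsq2
  have e0 : ∫ t, (f t - Fe t)^2 ∂ρ
      = ∫ t, ((f t - P t)^2 + (2*((f t - P t)*(P t - Fe t)) + (P t - Fe t)^2)) ∂ρ :=
    integral_congr_ae (Filter.Eventually.of_forall fun t => by ring)
  have e2 : ∫ t, ((f t - P t)^2 + (2*((f t - P t)*(P t - Fe t)) + (P t - Fe t)^2)) ∂ρ
      = (∫ t, (f t - P t)^2 ∂ρ)
        + ∫ t, (2*((f t - P t)*(P t - Fe t)) + (P t - Fe t)^2) ∂ρ :=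
    integral_add hsq1 hAdd2
  have e3 : ∫ t, (2*((f t - P t)*(P t - Fe t)) + (P t - Fe t)^2) ∂ρ
      = (∫ t, 2*((f t - P t)*(P t - Fe t)) ∂ρ) + ∫ t, (P t - Fe t)^2 ∂ρ :=
    integral_add hcross1 hsq2
  have hterm1 : 0 ≤ ∫ t, 2*((f t - P t)*(P t - Fe t)) ∂ρ := by
    rw [MeasureTheory.integral_const_mul]
    have hcore' : 0 ≤ ∫ t, (f t - P t) * (P t - Fe t) ∂ρ := hcore
    linarith
  have hterm2 : 0 ≤ ∫ t, (P t - Fe t) ^ 2 ∂ρ :=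
    integral_nonneg fun t => sq_nonneg _
  show (∫ t, (f t - P t)^2 ∂ρ) ≤ ∫ t, (f t - Fe t)^2 ∂ρ
  rw [e0, e2, e3]
  linarith
end

section
/- Let w1, w2 : [0,1]² → ℝ be continuous, and let P_{w1}, P_{w2} denote their projections onto the cone M[0,1]² of monotone surfaces, i.e., the minimizers of ∫_0^1 ∫_0^1 (w_i(s,t) − F(s,t))² ds dt over F ∈ M[0,1]². Then sup_{(s,t) ∈ [0,1]²} |P_{w1}(s,t) − P_{w2}(s,t)| ≤ sup_{(s,t) ∈ [0,1]²} |w1(s,t) − w2(s,t)|. -/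
open MeasureTheory Set

/-- `F` is monotone on `[0,1]²` with respect to the coordinatewise partial ordering. -/
def MonoSurf (F : ℝ × ℝ → ℝ) : Prop :=
  ∀ s₁ ∈ Icc (0:ℝ) 1, ∀ s₂ ∈ Icc (0:ℝ) 1, ∀ t₁ ∈ Icc (0:ℝ) 1, ∀ t₂ ∈ Icc (0:ℝ) 1,
    s₁ ≤ s₂ → t₁ ≤ t₂ → F (s₁, t₁) ≤ F (s₂, t₂)

/-! ### Auxiliary API for iterated integrals over `[0,1]²` -/

noncomputable def II (f : ℝ × ℝ → ℝ) : ℝ := ∫ s in (0:ℝ)..1, ∫ t in (0:ℝ)..1, f (s, t)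

lemma slice_cont {f : ℝ × ℝ → ℝ} (hf : Continuous f) (s : ℝ) :
    Continuous fun t => f (s, t) := hf.comp (Continuous.prodMk_right s)

lemma outer_cont {f : ℝ × ℝ → ℝ} (hf : Continuous f) :
    Continuous fun s => ∫ t in (0:ℝ)..1, f (s, t) := by
  exact intervalIntegral.continuous_parametric_intervalIntegral_of_continuous'
    (f := fun s t => f (s, t)) (by exact hf) 0 1

lemma II_congr {f g : ℝ × ℝ → ℝ} (h : EqOn f g (Icc (0:ℝ) 1 ×ˢ Icc (0:ℝ) 1)) :
    II f = II g := by
  unfold II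
  apply intervalIntegral.integral_congr
  intro s hs
  rw [uIcc_of_le zero_le_one] at hs
  apply intervalIntegral.integral_congr
  intro t ht
  rw [uIcc_of_le zero_le_one] at ht
  exact h (mk_mem_prod hs ht)

lemma II_add {f g : ℝ × ℝ → ℝ} (hf : Continuous f) (hg : Continuous g) :
    II (fun p => f p + g p) = II f + II g := by
  unfold II
  rw [intervalIntegral.integral_congr
    (g := fun s => (∫ t in (0:ℝ)..1, f (s,t)) + ∫ t in (0:ℝ)..1, g (s,t))
    (fun s _ => intervalIntegral.integral_add ((slice_cont hf s).intervalIntegrable _ _)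
      ((slice_cont hg s).intervalIntegrable _ _))]
  exact intervalIntegral.integral_add ((outer_cont hf).intervalIntegrable _ _)
    ((outer_cont hg).intervalIntegrable _ _)

lemma II_sub {f g : ℝ × ℝ → ℝ} (hf : Continuous f) (hg : Continuous g) :
    II (fun p => f p - g p) = II f - II g := by
  unfold II
  rw [intervalIntegral.integral_congr
    (g := fun s => (∫ t in (0:ℝ)..1, f (s,t)) - ∫ t in (0:ℝ)..1, g (s,t))
    (fun s _ => intervalIntegral.integral_sub ((slice_cont hf s).intervalIntegrable _ _)
      ((slice_cont hg s).intervalIntegrable _ _))]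
  exact intervalIntegral.integral_sub ((outer_cont hf).intervalIntegrable _ _)
    ((outer_cont hg).intervalIntegrable _ _)

lemma II_smul {f : ℝ × ℝ → ℝ} (hf : Continuous f) (c : ℝ) :
    II (fun p => c * f p) = c * II f := by
  unfold II
  rw [intervalIntegral.integral_congr (g := fun s => c * ∫ t in (0:ℝ)..1, f (s,t))
    (fun s _ => intervalIntegral.integral_const_mul _ _)]
  exact intervalIntegral.integral_const_mul _ _

lemma II_mono {f g : ℝ × ℝ → ℝ} (hf : Continuous f) (hg : Continuous g)
    (h : ∀ p, f p ≤ g p) : II f ≤ II g := by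
  unfold II
  apply intervalIntegral.integral_mono_on zero_le_one
    ((outer_cont hf).intervalIntegrable _ _) ((outer_cont hg).intervalIntegrable _ _)
  intro s _
  apply intervalIntegral.integral_mono_on zero_le_one
    ((slice_cont hf s).intervalIntegrable _ _) ((slice_cont hg s).intervalIntegrable _ _)
  exact fun t _ => h (s, t)

lemma II_zero : II (fun _ => (0:ℝ)) = 0 := by simp [II]

lemma II_nonneg {f : ℝ × ℝ → ℝ} (hf : Continuous f) (h : ∀ p, 0 ≤ f p) : 0 ≤ II f := by
  have := II_mono (f := fun _ => (0:ℝ)) continuous_const hf (fun p => h p)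
  rwa [II_zero] at this

/-! ### Vanishing of nonnegative continuous functions with zero integral -/

lemma oneD_zero {g : ℝ → ℝ} (hg : Continuous g) (h0 : ∀ x, 0 ≤ g x)
    (hint : (∫ x in (0:ℝ)..1, g x) = 0) : ∀ x ∈ Icc (0:ℝ) 1, g x = 0 := by
  intro x0 hx0
  by_contra hne
  have hpos : 0 < g x0 := (h0 x0).lt_of_ne (Ne.symm hne)
  rw [intervalIntegral.integral_of_le zero_le_one] at hint
  have hae : g =ᵐ[volume.restrict (Ioc (0:ℝ) 1)] 0 := by
    rw [← MeasureTheory.integral_eq_zero_iff_of_nonneg (fun x => h0 x)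
      (hg.integrableOn_Ioc)]
    exact hint
  have hmeas : MeasurableSet {x : ℝ | g x ≠ 0} :=
    (hg.measurable (measurableSet_singleton (0:ℝ)).compl : MeasurableSet (g ⁻¹' {0}ᶜ))
  have hnull : volume ({x : ℝ | g x ≠ 0} ∩ Ioc (0:ℝ) 1) = 0 := by
    have h2 := (MeasureTheory.ae_iff).mp hae
    simp only [Pi.zero_apply] at h2
    rwa [Measure.restrict_apply hmeas] at h2
  have hca : ContinuousAt g x0 := hg.continuousAt
  obtain ⟨δ, hδpos, hδ⟩ := Metric.continuousAt_iff.mp hca (g x0 / 2) (by linarith)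
  have hsub : Ioo (max 0 (x0 - δ)) (min 1 (x0 + δ)) ⊆ {x : ℝ | g x ≠ 0} ∩ Ioc (0:ℝ) 1 := by
    intro y hy
    obtain ⟨hy1, hy2⟩ := hy
    have h1 : 0 ≤ max 0 (x0 - δ) := le_max_left _ _
    have h2 : x0 - δ ≤ max 0 (x0 - δ) := le_max_right _ _
    have h3 : min 1 (x0 + δ) ≤ 1 := min_le_left _ _
    have h4 : min 1 (x0 + δ) ≤ x0 + δ := min_le_right _ _
    have hd : dist y x0 < δ := by
      rw [Real.dist_eq, abs_lt]; constructor <;> linarith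
    have := hδ hd
    rw [Real.dist_eq, abs_lt] at this
    constructor
    · show g y ≠ 0; intro h; rw [h] at this; simp at this; linarith [this.1]
    · constructor <;> linarith
  have hab : max 0 (x0 - δ) < min 1 (x0 + δ) := by
    obtain ⟨hx1, hx2⟩ := hx0
    rw [max_lt_iff, lt_min_iff, lt_min_iff]
    refine ⟨⟨zero_lt_one, by linarith⟩, ⟨by linarith, by linarith⟩⟩
  have := measure_mono (μ := volume) hsub
  rw [hnull, Real.volume_Ioo] at this
  simp only [nonpos_iff_eq_zero, ENNReal.ofReal_eq_zero] at this
  linarith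

lemma twoD_zero {f : ℝ × ℝ → ℝ} (hf : Continuous f) (h0 : ∀ p, 0 ≤ f p)
    (hint : II f = 0) : ∀ p ∈ Icc (0:ℝ) 1 ×ˢ Icc (0:ℝ) 1, f p = 0 := by
  have hh : ∀ s ∈ Icc (0:ℝ) 1, (∫ t in (0:ℝ)..1, f (s, t)) = 0 :=
    oneD_zero (outer_cont hf)
      (fun s => intervalIntegral.integral_nonneg zero_le_one (fun t _ => h0 (s, t))) hint
  rintro ⟨s, t⟩ hp
  exact oneD_zero (slice_cont hf s) (fun t => h0 (s, t)) (hh s hp.1) t hp.2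

/-! ### Clamping to the unit square -/

noncomputable def clamp (x : ℝ) : ℝ := max 0 (min 1 x)

noncomputable def cl (p : ℝ × ℝ) : ℝ × ℝ := (clamp p.1, clamp p.2)

lemma clamp_cont : Continuous clamp :=
  continuous_const.max (continuous_const.min continuous_id)

lemma clamp_mem (x : ℝ) : clamp x ∈ Icc (0:ℝ) 1 := by
  constructor
  · exact le_max_left _ _
  · exact max_le zero_le_one (min_le_left _ _)

lemma clamp_id {x : ℝ} (hx : x ∈ Icc (0:ℝ) 1) : clamp x = x := by
  obtain ⟨h1, h2⟩ := hx
  rw [clamp, min_eq_right h2, max_eq_right h1]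

lemma cl_cont : Continuous cl :=
  (clamp_cont.comp continuous_fst).prodMk (clamp_cont.comp continuous_snd)

lemma cl_mem (p : ℝ × ℝ) : cl p ∈ Icc (0:ℝ) 1 ×ˢ Icc (0:ℝ) 1 :=
  mk_mem_prod (clamp_mem _) (clamp_mem _)

lemma cl_id {p : ℝ × ℝ} (hp : p ∈ Icc (0:ℝ) 1 ×ˢ Icc (0:ℝ) 1) : cl p = p := by
  obtain ⟨h1, h2⟩ := hp
  simp only [cl, clamp_id h1, clamp_id h2]

/-! ### The key one-sided estimate -/

lemma key_estimate (w₁ w₂ P₁ P₂ : ℝ × ℝ → ℝ)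
    (hw₁ : ContinuousOn w₁ (Icc (0:ℝ) 1 ×ˢ Icc (0:ℝ) 1))
    (hw₂ : ContinuousOn w₂ (Icc (0:ℝ) 1 ×ˢ Icc (0:ℝ) 1))
    (hP₁c : ContinuousOn P₁ (Icc (0:ℝ) 1 ×ˢ Icc (0:ℝ) 1)) (hP₁m : MonoSurf P₁)
    (hP₂c : ContinuousOn P₂ (Icc (0:ℝ) 1 ×ˢ Icc (0:ℝ) 1)) (hP₂m : MonoSurf P₂)
    (hP₁ : ∀ F : ℝ × ℝ → ℝ, ContinuousOn F (Icc (0:ℝ) 1 ×ˢ Icc (0:ℝ) 1) → MonoSurf F →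
      ∫ s in (0:ℝ)..1, ∫ t in (0:ℝ)..1, (w₁ (s, t) - P₁ (s, t)) ^ 2 ≤
        ∫ s in (0:ℝ)..1, ∫ t in (0:ℝ)..1, (w₁ (s, t) - F (s, t)) ^ 2)
    (hP₂ : ∀ F : ℝ × ℝ → ℝ, ContinuousOn F (Icc (0:ℝ) 1 ×ˢ Icc (0:ℝ) 1) → MonoSurf F →
      ∫ s in (0:ℝ)..1, ∫ t in (0:ℝ)..1, (w₂ (s, t) - P₂ (s, t)) ^ 2 ≤
        ∫ s in (0:ℝ)..1, ∫ t in (0:ℝ)..1, (w₂ (s, t) - F (s, t)) ^ 2)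
    (δ : ℝ) (hδ : ∀ p ∈ Icc (0:ℝ) 1 ×ˢ Icc (0:ℝ) 1, w₁ p - w₂ p ≤ δ) :
    ∀ p ∈ Icc (0:ℝ) 1 ×ˢ Icc (0:ℝ) 1, P₁ p - P₂ p ≤ δ := by
  classical
  -- clamped (globally continuous) versions
  set v1 : ℝ × ℝ → ℝ := fun p => w₁ (cl p) with hv1d
  set v2 : ℝ × ℝ → ℝ := fun p => w₂ (cl p) with hv2d
  set q1 : ℝ × ℝ → ℝ := fun p => P₁ (cl p) with hq1d
  set q2 : ℝ × ℝ → ℝ := fun p => P₂ (cl p) with hq2d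
  have hv1c : Continuous v1 := hw₁.comp_continuous cl_cont cl_mem
  have hv2c : Continuous v2 := hw₂.comp_continuous cl_cont cl_mem
  have hq1c : Continuous q1 := hP₁c.comp_continuous cl_cont cl_mem
  have hq2c : Continuous q2 := hP₂c.comp_continuous cl_cont cl_mem
  set e : ℝ × ℝ → ℝ := fun p => max (q1 p - q2 p - δ) 0 with hed
  set F : ℝ × ℝ → ℝ := fun p => min (q1 p) (q2 p + δ) with hFd
  set G : ℝ × ℝ → ℝ := fun p => max (q2 p) (q1 p - δ) with hGd
  set M : ℝ × ℝ → ℝ := fun p => (q1 p + F p) / 2 with hMd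
  set N : ℝ × ℝ → ℝ := fun p => (q2 p + G p) / 2 with hNd
  have hec : Continuous e := ((hq1c.sub hq2c).sub continuous_const).max continuous_const
  have hFc : Continuous F := hq1c.min (hq2c.add continuous_const)
  have hGc : Continuous G := hq2c.max (hq1c.sub continuous_const)
  have hMc : Continuous M := (hq1c.add hFc).div_const 2
  have hNc : Continuous N := (hq2c.add hGc).div_const 2
  have he0 : ∀ p, 0 ≤ e p := fun p => le_max_right _ _
  have hFe : ∀ p, F p = q1 p - e p := by
    intro p
    simp only [hFd, hed]
    rcases le_total (q1 p) (q2 p + δ) with h | h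
    · rw [min_eq_left h, max_eq_right (by linarith), sub_zero]
    · rw [min_eq_right h, max_eq_left (by linarith)]; ring
  have hGe : ∀ p, G p = q2 p + e p := by
    intro p
    simp only [hGd, hed]
    rcases le_total (q1 p - δ) (q2 p) with h | h
    · rw [max_eq_left h, max_eq_right (by linarith), add_zero]
    · rw [max_eq_right h, max_eq_left (by linarith)]; ring
  -- values on the square
  have hq1eq : ∀ p ∈ Icc (0:ℝ) 1 ×ˢ Icc (0:ℝ) 1, q1 p = P₁ p := by
    intro p hp; simp only [hq1d, cl_id hp]
  have hq2eq : ∀ p ∈ Icc (0:ℝ) 1 ×ˢ Icc (0:ℝ) 1, q2 p = P₂ p := by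
    intro p hp; simp only [hq2d, cl_id hp]
  -- monotonicity
  have hFm : MonoSurf F := by
    intro s₁ hs₁ s₂ hs₂ t₁ ht₁ t₂ ht₂ h12 hts
    have m1 : ((s₁, t₁) : ℝ × ℝ) ∈ Icc (0:ℝ) 1 ×ˢ Icc (0:ℝ) 1 := mk_mem_prod hs₁ ht₁
    have m2 : ((s₂, t₂) : ℝ × ℝ) ∈ Icc (0:ℝ) 1 ×ˢ Icc (0:ℝ) 1 := mk_mem_prod hs₂ ht₂
    have h1 := hP₁m s₁ hs₁ s₂ hs₂ t₁ ht₁ t₂ ht₂ h12 hts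
    have h2 := hP₂m s₁ hs₁ s₂ hs₂ t₁ ht₁ t₂ ht₂ h12 hts
    simp only [hFd, hq1eq _ m1, hq1eq _ m2, hq2eq _ m1, hq2eq _ m2]
    exact le_min ((min_le_left _ _).trans h1)
      ((min_le_right _ _).trans (by linarith))
  have hGm : MonoSurf G := by
    intro s₁ hs₁ s₂ hs₂ t₁ ht₁ t₂ ht₂ h12 hts
    have m1 : ((s₁, t₁) : ℝ × ℝ) ∈ Icc (0:ℝ) 1 ×ˢ Icc (0:ℝ) 1 := mk_mem_prod hs₁ ht₁
    have m2 : ((s₂, t₂) : ℝ × ℝ) ∈ Icc (0:ℝ) 1 ×ˢ Icc (0:ℝ) 1 := mk_mem_prod hs₂ ht₂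
    have h1 := hP₁m s₁ hs₁ s₂ hs₂ t₁ ht₁ t₂ ht₂ h12 hts
    have h2 := hP₂m s₁ hs₁ s₂ hs₂ t₁ ht₁ t₂ ht₂ h12 hts
    simp only [hGd, hq1eq _ m1, hq1eq _ m2, hq2eq _ m1, hq2eq _ m2]
    exact max_le_max h2 (by linarith)
  have hMm : MonoSurf M := by
    intro s₁ hs₁ s₂ hs₂ t₁ ht₁ t₂ ht₂ h12 hts
    have m1 : ((s₁, t₁) : ℝ × ℝ) ∈ Icc (0:ℝ) 1 ×ˢ Icc (0:ℝ) 1 := mk_mem_prod hs₁ ht₁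
    have m2 : ((s₂, t₂) : ℝ × ℝ) ∈ Icc (0:ℝ) 1 ×ˢ Icc (0:ℝ) 1 := mk_mem_prod hs₂ ht₂
    have h1 := hP₁m s₁ hs₁ s₂ hs₂ t₁ ht₁ t₂ ht₂ h12 hts
    have h2 := hFm s₁ hs₁ s₂ hs₂ t₁ ht₁ t₂ ht₂ h12 hts
    simp only [hMd]
    rw [hq1eq _ m1, hq1eq _ m2]
    linarith
  have hNm : MonoSurf N := by
    intro s₁ hs₁ s₂ hs₂ t₁ ht₁ t₂ ht₂ h12 hts
    have m1 : ((s₁, t₁) : ℝ × ℝ) ∈ Icc (0:ℝ) 1 ×ˢ Icc (0:ℝ) 1 := mk_mem_prod hs₁ ht₁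
    have m2 : ((s₂, t₂) : ℝ × ℝ) ∈ Icc (0:ℝ) 1 ×ˢ Icc (0:ℝ) 1 := mk_mem_prod hs₂ ht₂
    have h1 := hP₂m s₁ hs₁ s₂ hs₂ t₁ ht₁ t₂ ht₂ h12 hts
    have h2 := hGm s₁ hs₁ s₂ hs₂ t₁ ht₁ t₂ ht₂ h12 hts
    simp only [hNd]
    rw [hq2eq _ m1, hq2eq _ m2]
    linarith
  -- continuity of the squared integrands
  have hX1c : Continuous fun p => (v1 p - q1 p) ^ 2 := (hv1c.sub hq1c).pow 2
  have hY1c : Continuous fun p => (v1 p - F p) ^ 2 := (hv1c.sub hFc).pow 2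
  have hX2c : Continuous fun p => (v2 p - q2 p) ^ 2 := (hv2c.sub hq2c).pow 2
  have hY2c : Continuous fun p => (v2 p - G p) ^ 2 := (hv2c.sub hGc).pow 2
  have hZc : Continuous fun p => (e p) ^ 2 := hec.pow 2
  -- translate the minimizing property to clamped integrands
  have key1 : II (fun p => (v1 p - q1 p) ^ 2) ≤ II (fun p => (v1 p - F p) ^ 2) := by
    have h : II (fun p => (w₁ p - P₁ p) ^ 2) ≤ II (fun p => (w₁ p - F p) ^ 2) :=
      hP₁ F hFc.continuousOn hFm
    have hL : II (fun p => (w₁ p - P₁ p) ^ 2) = II (fun p => (v1 p - q1 p) ^ 2) :=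
      II_congr (fun p hp => by simp only [hv1d, hq1d, cl_id hp])
    have hR : II (fun p => (w₁ p - F p) ^ 2) = II (fun p => (v1 p - F p) ^ 2) :=
      II_congr (fun p hp => by simp only [hv1d, cl_id hp])
    rwa [hL, hR] at h
  have key2 : II (fun p => (v1 p - q1 p) ^ 2) ≤ II (fun p => (v1 p - M p) ^ 2) := by
    have h : II (fun p => (w₁ p - P₁ p) ^ 2) ≤ II (fun p => (w₁ p - M p) ^ 2) :=
      hP₁ M hMc.continuousOn hMm
    have hL : II (fun p => (w₁ p - P₁ p) ^ 2) = II (fun p => (v1 p - q1 p) ^ 2) :=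
      II_congr (fun p hp => by simp only [hv1d, hq1d, cl_id hp])
    have hR : II (fun p => (w₁ p - M p) ^ 2) = II (fun p => (v1 p - M p) ^ 2) :=
      II_congr (fun p hp => by simp only [hv1d, cl_id hp])
    rwa [hL, hR] at h
  have key3 : II (fun p => (v2 p - q2 p) ^ 2) ≤ II (fun p => (v2 p - G p) ^ 2) := by
    have h : II (fun p => (w₂ p - P₂ p) ^ 2) ≤ II (fun p => (w₂ p - G p) ^ 2) :=
      hP₂ G hGc.continuousOn hGm
    have hL : II (fun p => (w₂ p - P₂ p) ^ 2) = II (fun p => (v2 p - q2 p) ^ 2) :=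
      II_congr (fun p hp => by simp only [hv2d, hq2d, cl_id hp])
    have hR : II (fun p => (w₂ p - G p) ^ 2) = II (fun p => (v2 p - G p) ^ 2) :=
      II_congr (fun p hp => by simp only [hv2d, cl_id hp])
    rwa [hL, hR] at h
  have key4 : II (fun p => (v2 p - q2 p) ^ 2) ≤ II (fun p => (v2 p - N p) ^ 2) := by
    have h : II (fun p => (w₂ p - P₂ p) ^ 2) ≤ II (fun p => (w₂ p - N p) ^ 2) :=
      hP₂ N hNc.continuousOn hNm
    have hL : II (fun p => (w₂ p - P₂ p) ^ 2) = II (fun p => (v2 p - q2 p) ^ 2) :=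
      II_congr (fun p hp => by simp only [hv2d, hq2d, cl_id hp])
    have hR : II (fun p => (w₂ p - N p) ^ 2) = II (fun p => (v2 p - N p) ^ 2) :=
      II_congr (fun p hp => by simp only [hv2d, cl_id hp])
    rwa [hL, hR] at h
  -- midpoint expansion
  have hMexp : II (fun p => (v1 p - M p) ^ 2) =
      (1/2) * II (fun p => (v1 p - q1 p) ^ 2) +
      ((1/2) * II (fun p => (v1 p - F p) ^ 2) + (-(1/4)) * II (fun p => (e p) ^ 2)) := by
    have hid : (fun p => (v1 p - M p) ^ 2) =
        fun p => (1/2) * (v1 p - q1 p) ^ 2 +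
          ((1/2) * (v1 p - F p) ^ 2 + (-(1/4)) * (e p) ^ 2) := by
      funext p
      have h1 : F p = q1 p - e p := hFe p
      simp only [hMd]
      rw [h1]
      ring
    rw [hid, II_add (f := fun p => (1/2) * (v1 p - q1 p) ^ 2)
      (g := fun p => (1/2) * (v1 p - F p) ^ 2 + (-(1/4)) * (e p) ^ 2) (continuous_const.mul hX1c)
      ((continuous_const.mul hY1c).add (continuous_const.mul hZc)),
      II_add (f := fun p => (1/2) * (v1 p - F p) ^ 2) (g := fun p => (-(1/4)) * (e p) ^ 2)
        (continuous_const.mul hY1c) (continuous_const.mul hZc),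
      II_smul hX1c, II_smul hY1c, II_smul hZc]
  have hNexp : II (fun p => (v2 p - N p) ^ 2) =
      (1/2) * II (fun p => (v2 p - q2 p) ^ 2) +
      ((1/2) * II (fun p => (v2 p - G p) ^ 2) + (-(1/4)) * II (fun p => (e p) ^ 2)) := by
    have hid : (fun p => (v2 p - N p) ^ 2) =
        fun p => (1/2) * (v2 p - q2 p) ^ 2 +
          ((1/2) * (v2 p - G p) ^ 2 + (-(1/4)) * (e p) ^ 2) := by
      funext p
      have h1 : G p = q2 p + e p := hGe p
      simp only [hNd]
      rw [h1]
      ring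
    rw [hid, II_add (f := fun p => (1/2) * (v2 p - q2 p) ^ 2)
      (g := fun p => (1/2) * (v2 p - G p) ^ 2 + (-(1/4)) * (e p) ^ 2) (continuous_const.mul hX2c)
      ((continuous_const.mul hY2c).add (continuous_const.mul hZc)),
      II_add (f := fun p => (1/2) * (v2 p - G p) ^ 2) (g := fun p => (-(1/4)) * (e p) ^ 2)
        (continuous_const.mul hY2c) (continuous_const.mul hZc),
      II_smul hX2c, II_smul hY2c, II_smul hZc]
  -- the sum of gains is nonpositive
  have hsum : (II (fun p => (v1 p - F p) ^ 2) - II (fun p => (v1 p - q1 p) ^ 2)) +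
      (II (fun p => (v2 p - G p) ^ 2) - II (fun p => (v2 p - q2 p) ^ 2)) ≤ 0 := by
    have hptwise : ∀ p, ((v1 p - F p) ^ 2 - (v1 p - q1 p) ^ 2) +
        ((v2 p - G p) ^ 2 - (v2 p - q2 p) ^ 2) ≤ 0 := by
      intro p
      have hv : v1 p - v2 p ≤ δ := by
        simp only [hv1d, hv2d]
        exact hδ _ (cl_mem p)
      have h1 : F p = q1 p - e p := hFe p
      have h2 : G p = q2 p + e p := hGe p
      rw [h1, h2]
      rcases le_total (q1 p - q2 p - δ) 0 with h | h
      · have he : e p = 0 := by rw [hed]; exact max_eq_right h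
        rw [he]; ring_nf; simp
      · have he : e p = q1 p - q2 p - δ := by rw [hed]; exact max_eq_left h
        rw [he]
        nlinarith [mul_nonneg h (sub_nonneg.mpr hv)]
    have hcomb : II (fun p => ((v1 p - F p) ^ 2 - (v1 p - q1 p) ^ 2) +
        ((v2 p - G p) ^ 2 - (v2 p - q2 p) ^ 2)) ≤ 0 := by
      have := II_mono ((hY1c.sub hX1c).add (hY2c.sub hX2c)) continuous_const
        (fun p => hptwise p)
      rwa [show II (fun _ : ℝ × ℝ => (0:ℝ)) = 0 from II_zero] at this
    rwa [II_add (f := fun p => (v1 p - F p) ^ 2 - (v1 p - q1 p) ^ 2)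
      (g := fun p => (v2 p - G p) ^ 2 - (v2 p - q2 p) ^ 2) (hY1c.sub hX1c) (hY2c.sub hX2c), II_sub hY1c hX1c, II_sub hY2c hX2c] at hcomb
  -- conclude ∫∫ e² = 0
  have hZ1 : II (fun p => (e p) ^ 2) ≤
      2 * (II (fun p => (v1 p - F p) ^ 2) - II (fun p => (v1 p - q1 p) ^ 2)) := by
    rw [hMexp] at key2; linarith
  have hZ2 : II (fun p => (e p) ^ 2) ≤
      2 * (II (fun p => (v2 p - G p) ^ 2) - II (fun p => (v2 p - q2 p) ^ 2)) := by
    rw [hNexp] at key4; linarith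
  have hZnn : 0 ≤ II (fun p => (e p) ^ 2) := II_nonneg hZc (fun p => sq_nonneg _)
  have hZ0 : II (fun p => (e p) ^ 2) = 0 := le_antisymm (by linarith) hZnn
  -- hence e vanishes on the square
  intro p hp
  have hez : (e p) ^ 2 = 0 := twoD_zero hZc (fun p => sq_nonneg _) hZ0 p hp
  have he : e p = 0 := by
    have := pow_eq_zero_iff (n := 2) (by norm_num) |>.mp hez
    exact this
  have hle : q1 p - q2 p - δ ≤ 0 := by
    have h : q1 p - q2 p - δ ≤ e p := le_max_left _ _
    rwa [he] at h
  rw [hq1eq p hp, hq2eq p hp] at hle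
  linarith

/-- The projection onto the cone of monotone surfaces is a contraction with respect to the
supremum norm on `[0,1]²`: if `P₁, P₂` are the `L²([0,1]²)` projections of continuous
`w₁, w₂` onto `M[0,1]²`, then `sup |P₁ − P₂| ≤ sup |w₁ − w₂|`. -/
theorem surface_projection_sup_contraction
    (w₁ w₂ P₁ P₂ : ℝ × ℝ → ℝ)
    (hw₁ : ContinuousOn w₁ (Icc (0:ℝ) 1 ×ˢ Icc (0:ℝ) 1))
    (hw₂ : ContinuousOn w₂ (Icc (0:ℝ) 1 ×ˢ Icc (0:ℝ) 1))
    (hP₁c : ContinuousOn P₁ (Icc (0:ℝ) 1 ×ˢ Icc (0:ℝ) 1)) (hP₁m : MonoSurf P₁)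
    (hP₂c : ContinuousOn P₂ (Icc (0:ℝ) 1 ×ˢ Icc (0:ℝ) 1)) (hP₂m : MonoSurf P₂)
    (hP₁ : ∀ F : ℝ × ℝ → ℝ, ContinuousOn F (Icc (0:ℝ) 1 ×ˢ Icc (0:ℝ) 1) → MonoSurf F →
      ∫ s in (0:ℝ)..1, ∫ t in (0:ℝ)..1, (w₁ (s, t) - P₁ (s, t)) ^ 2 ≤
        ∫ s in (0:ℝ)..1, ∫ t in (0:ℝ)..1, (w₁ (s, t) - F (s, t)) ^ 2)
    (hP₂ : ∀ F : ℝ × ℝ → ℝ, ContinuousOn F (Icc (0:ℝ) 1 ×ˢ Icc (0:ℝ) 1) → MonoSurf F →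
      ∫ s in (0:ℝ)..1, ∫ t in (0:ℝ)..1, (w₂ (s, t) - P₂ (s, t)) ^ 2 ≤
        ∫ s in (0:ℝ)..1, ∫ t in (0:ℝ)..1, (w₂ (s, t) - F (s, t)) ^ 2) :
    ⨆ p : (Icc (0:ℝ) 1 ×ˢ Icc (0:ℝ) 1 : Set (ℝ × ℝ)), |P₁ p - P₂ p| ≤
      ⨆ p : (Icc (0:ℝ) 1 ×ˢ Icc (0:ℝ) 1 : Set (ℝ × ℝ)), |w₁ p - w₂ p| := by
  have hsq : ((0:ℝ), (0:ℝ)) ∈ Icc (0:ℝ) 1 ×ˢ Icc (0:ℝ) 1 :=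
    mk_mem_prod (by norm_num) (by norm_num)
  haveI hne : Nonempty (Icc (0:ℝ) 1 ×ˢ Icc (0:ℝ) 1 : Set (ℝ × ℝ)) := ⟨⟨_, hsq⟩⟩
  set δ := ⨆ p : (Icc (0:ℝ) 1 ×ˢ Icc (0:ℝ) 1 : Set (ℝ × ℝ)), |w₁ p - w₂ p| with hδd
  have hbdd : BddAbove (range fun p : (Icc (0:ℝ) 1 ×ˢ Icc (0:ℝ) 1 : Set (ℝ × ℝ)) =>
      |w₁ p - w₂ p|) := by
    rw [show (fun p : (Icc (0:ℝ) 1 ×ˢ Icc (0:ℝ) 1 : Set (ℝ × ℝ)) => |w₁ p - w₂ p|) =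
      (Icc (0:ℝ) 1 ×ˢ Icc (0:ℝ) 1).domRestrict (fun p => |w₁ p - w₂ p|) from rfl,
      range_domRestrict]
    exact ((isCompact_Icc.prod isCompact_Icc).image_of_continuousOn
      (hw₁.sub hw₂).abs).bddAbove
  have hδ : ∀ p ∈ Icc (0:ℝ) 1 ×ˢ Icc (0:ℝ) 1, |w₁ p - w₂ p| ≤ δ := by
    intro p hp
    exact le_ciSup hbdd (⟨p, hp⟩ : (Icc (0:ℝ) 1 ×ˢ Icc (0:ℝ) 1 : Set (ℝ × ℝ)))
  have hd1 : ∀ p ∈ Icc (0:ℝ) 1 ×ˢ Icc (0:ℝ) 1, P₁ p - P₂ p ≤ δ :=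
    key_estimate w₁ w₂ P₁ P₂ hw₁ hw₂ hP₁c hP₁m hP₂c hP₂m hP₁ hP₂ δ
      (fun p hp => (abs_sub_le_iff.mp (hδ p hp)).1)
  have hd2 : ∀ p ∈ Icc (0:ℝ) 1 ×ˢ Icc (0:ℝ) 1, P₂ p - P₁ p ≤ δ :=
    key_estimate w₂ w₁ P₂ P₁ hw₂ hw₁ hP₂c hP₂m hP₁c hP₁m hP₂ hP₁ δ
      (fun p hp => (abs_sub_le_iff.mp (hδ p hp)).2)
  exact ciSup_le fun p => abs_sub_le_iff.mpr ⟨hd1 p p.2, hd2 p p.2⟩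
end
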